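/- arXiv:1308.1993 — 6 statements merged into one kernel-verified Lean document; each statement's English description precedes it below -/
import Mathlib

section
/- Let Ω ⊆ ℝⁿ be a nonempty closed hyper-rectangle and g : Ω → ℝⁿ a continuously differentiable map such that for every x ∈ Ω, ∂gᵢ/∂xⱼ(x) ≥ 0 for all i ≠ j, and ∑ᵢ ∂gᵢ/∂xⱼ(x) ≤ 0 for all j. Suppose in addition there exists an index j₀ such that ∑ᵢ ∂gᵢ/∂x_{j₀}(x) < 0 for all x ∈ Ω. Then for all x, y ∈ Ω with x_{j₀} ≠ y_{j₀}, ∑ᵢ sgn(xᵢ − yᵢ)(gᵢ(x) − gᵢ(y)) < 0. -/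
private lemma sign_mul_self_eq_abs (r : ℝ) : Real.sign r * r = |r| := by
  rcases lt_trichotomy r 0 with h | h | h
  · rw [Real.sign_of_neg h, abs_of_neg h]; ring
  · simp [h]
  · rw [Real.sign_of_pos h, abs_of_pos h]; ring

private lemma abs_sign_le_one (r : ℝ) : |Real.sign r| ≤ 1 := by
  rcases lt_trichotomy r 0 with h | h | h
  · rw [Real.sign_of_neg h]; norm_num
  · simp [h]
  · rw [Real.sign_of_pos h]; norm_num

/-- Strict l1-contraction inequality under a strict column-sum condition
for one coordinate, for C¹ maps on a closed hyper-rectangle. -/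
theorem stmt_1 (n : ℕ) (a b : Fin n → ℝ)
    (Ω : Set (Fin n → ℝ)) (hΩ : Ω = Set.univ.pi fun i => Set.Icc (a i) (b i))
    (hne : Ω.Nonempty)
    (g : (Fin n → ℝ) → (Fin n → ℝ)) (hg : ContDiff ℝ 1 g)
    (hcoop : ∀ x ∈ Ω, ∀ i j, i ≠ j → 0 ≤ fderiv ℝ g x (Pi.single j 1) i)
    (hcol : ∀ x ∈ Ω, ∀ j, ∑ i, fderiv ℝ g x (Pi.single j 1) i ≤ 0)
    (j₀ : Fin n)
    (hstrict : ∀ x ∈ Ω, ∑ i, fderiv ℝ g x (Pi.single j₀ 1) i < 0) :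
    ∀ x ∈ Ω, ∀ y ∈ Ω, x j₀ ≠ y j₀ →
      ∑ i, Real.sign (x i - y i) * (g x i - g y i) < 0 := by
  intro x hx y hy hxy
  have hconv : Convex ℝ Ω := by
    rw [hΩ]; exact convex_pi fun i _ => convex_Icc _ _
  set z : ℝ → (Fin n → ℝ) := fun t => y + t • (x - y) with hzdef
  have hzmem : ∀ t ∈ Set.Icc (0:ℝ) 1, z t ∈ Ω := fun t ht =>
    hconv.add_smul_sub_mem hy hx ht
  have hdiff := hg.differentiable one_ne_zero
  have hz' : ∀ t : ℝ, HasDerivAt z (x - y) t := by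
    intro t
    have : HasDerivAt (fun t : ℝ => y + t • (x - y)) ((1:ℝ) • (x - y)) t :=
      ((hasDerivAt_id t).smul_const (x - y)).const_add y
    rw [one_smul] at this
    exact this
  have hderiv : ∀ t : ℝ, ∀ i, HasDerivAt (fun t => g (z t) i)
      ((fderiv ℝ g (z t)) (x - y) i) t := by
    intro t i
    have hgz : HasDerivAt (fun t => g (z t)) ((fderiv ℝ g (z t)) (x - y)) t :=
      (hdiff (z t)).hasFDerivAt.comp_hasDerivAt t (hz' t)
    exact hasDerivAt_pi.mp hgz i
  have hDcont : Continuous fun t => (fderiv ℝ g (z t)) (x - y) := by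
    have hzc : Continuous z := by fun_prop
    exact ((hg.continuous_fderiv one_ne_zero).comp hzc).clm_apply continuous_const
  have hDcont' : ∀ i, Continuous fun t => (fderiv ℝ g (z t)) (x - y) i :=
    fun i => (continuous_apply i).comp hDcont
  have key : ∀ i, g x i - g y i = ∫ t in (0:ℝ)..1, (fderiv ℝ g (z t)) (x - y) i := by
    intro i
    have h := intervalIntegral.integral_eq_sub_of_hasDerivAt
      (f := fun t => g (z t) i) (fun t _ => hderiv t i)
      ((hDcont' i).intervalIntegrable 0 1)
    have h1 : z 1 = x := by simp [hzdef]
    have h0 : z 0 = y := by simp [hzdef]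
    simp only [h1, h0] at h
    exact h.symm
  -- pointwise strict estimate
  have hpt : ∀ t ∈ Set.Icc (0:ℝ) 1,
      ∑ i, Real.sign (x i - y i) * ((fderiv ℝ g (z t)) (x - y) i) < 0 := by
    intro t ht
    have hzΩ := hzmem t ht
    have hexp : (fderiv ℝ g (z t)) (x - y)
        = ∑ j, (x j - y j) • (fderiv ℝ g (z t)) (Pi.single j 1) := by
      have hxy' : (x - y) = ∑ j, (x j - y j) • (Pi.single j 1 : Fin n → ℝ) := by
        ext k
        simp [Pi.single_apply, Finset.sum_apply]
      rw [hxy', map_sum]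
      simp
    rw [hexp]
    have step1 : ∑ i, Real.sign (x i - y i) *
          (∑ j, (x j - y j) • (fderiv ℝ g (z t)) (Pi.single j 1)) i
        = ∑ j, ∑ i, Real.sign (x i - y i) *
          ((x j - y j) * (fderiv ℝ g (z t)) (Pi.single j 1) i) := by
      rw [Finset.sum_comm]
      congr 1; ext i
      rw [Finset.sum_apply, Finset.mul_sum]
      simp [smul_eq_mul]
    rw [step1]
    have hcolsum : ∀ j, ∑ i, Real.sign (x i - y i) *
          ((x j - y j) * (fderiv ℝ g (z t)) (Pi.single j 1) i)
        ≤ |x j - y j| * ∑ i, (fderiv ℝ g (z t)) (Pi.single j 1) i := by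
      intro j
      rw [Finset.mul_sum]
      apply Finset.sum_le_sum
      intro i _
      by_cases hij : i = j
      · subst hij
        rw [← mul_assoc, sign_mul_self_eq_abs]
      · have hA := hcoop (z t) hzΩ i j hij
        rw [← mul_assoc]
        apply mul_le_mul_of_nonneg_right _ hA
        calc Real.sign (x i - y i) * (x j - y j)
            ≤ |Real.sign (x i - y i) * (x j - y j)| := le_abs_self _
          _ = |Real.sign (x i - y i)| * |x j - y j| := abs_mul _ _
          _ ≤ 1 * |x j - y j| := by
              exact mul_le_mul_of_nonneg_right (abs_sign_le_one _) (abs_nonneg _)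
          _ = |x j - y j| := one_mul _
    have hfinal : ∑ j, |x j - y j| * ∑ i, (fderiv ℝ g (z t)) (Pi.single j 1) i < 0 := by
      have hle : ∀ j ∈ (Finset.univ.erase j₀),
          |x j - y j| * ∑ i, (fderiv ℝ g (z t)) (Pi.single j 1) i ≤ 0 :=
        fun j _ => mul_nonpos_of_nonneg_of_nonpos (abs_nonneg _) (hcol (z t) hzΩ j)
      have hlt : |x j₀ - y j₀| * ∑ i, (fderiv ℝ g (z t)) (Pi.single j₀ 1) i < 0 :=
        mul_neg_of_pos_of_neg (abs_pos.mpr (sub_ne_zero.mpr hxy)) (hstrict (z t) hzΩ)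
      have := Finset.add_sum_erase Finset.univ
        (fun j => |x j - y j| * ∑ i, (fderiv ℝ g (z t)) (Pi.single j 1) i)
        (Finset.mem_univ j₀)
      have hsum := Finset.sum_nonpos hle
      linarith
    calc ∑ j, ∑ i, Real.sign (x i - y i) *
          ((x j - y j) * (fderiv ℝ g (z t)) (Pi.single j 1) i)
        ≤ ∑ j, |x j - y j| * ∑ i, (fderiv ℝ g (z t)) (Pi.single j 1) i :=
          Finset.sum_le_sum fun j _ => hcolsum j
      _ < 0 := hfinal
  -- combine via integration
  have hint : ∀ i, IntervalIntegrable
      (fun t => Real.sign (x i - y i) * (fderiv ℝ g (z t)) (x - y) i)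
      MeasureTheory.volume 0 1 :=
    fun i => (continuous_const.mul (hDcont' i)).intervalIntegrable 0 1
  have hScont : Continuous fun t => ∑ i, Real.sign (x i - y i) *
      (fderiv ℝ g (z t)) (x - y) i :=
    continuous_finset_sum _ fun i _ => continuous_const.mul (hDcont' i)
  have heq : ∑ i, Real.sign (x i - y i) * (g x i - g y i)
      = ∫ t in (0:ℝ)..1, ∑ i, Real.sign (x i - y i) * (fderiv ℝ g (z t)) (x - y) i := by
    rw [intervalIntegral.integral_finset_sum fun i _ => hint i]
    congr 1; ext i
    rw [key i, intervalIntegral.integral_const_mul]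
  rw [heq]
  have hpos : (0:ℝ) < ∫ t in (0:ℝ)..1,
      -(∑ i, Real.sign (x i - y i) * (fderiv ℝ g (z t)) (x - y) i) := by
    apply intervalIntegral.intervalIntegral_pos_of_pos_on
    · exact hScont.neg.intervalIntegrable 0 1
    · intro t ht
      have := hpt t ⟨le_of_lt ht.1, le_of_lt ht.2⟩
      linarith
    · norm_num
  rw [intervalIntegral.integral_neg] at hpos
  linarith
end

section
/- Let g : ℝⁿ → ℝⁿ be Lipschitz with, almost everywhere, nonnegative off-diagonal partial derivatives (∂gᵢ/∂xⱼ ≥ 0 for i ≠ j) and nonpositive column sums (∑ᵢ ∂gᵢ/∂xⱼ ≤ 0 for all j). If x(t) and y(t) are two solutions of the ODE ż = g(z) defined on [0,T], then the function φ(t) := ‖x(t) − y(t)‖₁ is nonincreasing on [0,T]. -/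
open MeasureTheory

section Auxiliary

open Filter Set

lemma ftc_lip {F ψ : ℝ → ℝ} {C : NNReal} (hF : LipschitzWith C F)
    (hψm : Measurable ψ)
    (hψ : ∀ᵐ s ∂(volume : Measure ℝ), HasDerivAt F (ψ s) s) :
    F 1 - F 0 = ∫ s in Set.Ioc (0:ℝ) 1, ψ s := by
  have hFc : Continuous F := hF.continuous
  set G : ℝ → ℝ := fun t => ∫ s in (0:ℝ)..t, F s with hGdef
  have hG : ∀ a : ℝ, HasDerivAt G (F a) a := fun a =>
    (hFc.integral_hasStrictDerivAt 0 a).hasDerivAt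
  set ε : ℕ → ℝ := fun k => 1 / (k + 1) with hεdef
  have hεpos : ∀ k, 0 < ε k := fun k => by positivity
  have hεlim : Tendsto ε atTop (nhds 0) := tendsto_one_div_add_atTop_nhds_zero_nat
  -- the approximating integrals
  have key : ∀ k, (∫ s in Set.Ioc (0:ℝ) 1, (F (s + ε k) - F s) / ε k)
      = (G (1 + ε k) - G 1) / ε k - (G (0 + ε k) - G 0) / ε k := by
    intro k
    have hint : ∀ a b : ℝ, IntervalIntegrable F volume a b := fun a b =>
      hFc.intervalIntegrable a b
    have h1 : (∫ s in (0:ℝ)..1, F (s + ε k)) = ∫ s in (0 + ε k)..(1 + ε k), F s :=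
      (intervalIntegral.integral_comp_add_right F (ε k))
    have h2 : (∫ s in (0 + ε k)..(1 + ε k), F s) = G (1 + ε k) - G (0 + ε k) := by
      rw [hGdef]
      simp only
      rw [← intervalIntegral.integral_add_adjacent_intervals (hint 0 (0 + ε k)) (hint (0 + ε k) (1 + ε k))]
      ring
    have h3 : (∫ s in (0:ℝ)..1, (F (s + ε k) - F s))
        = (∫ s in (0:ℝ)..1, F (s + ε k)) - ∫ s in (0:ℝ)..1, F s := by
      exact intervalIntegral.integral_sub ((hFc.comp (continuous_add_right _)).intervalIntegrable 0 1) (hint 0 1)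
    have hG1 : (∫ s in (0:ℝ)..1, F s) = G 1 := rfl
    have hG0 : G 0 = 0 := intervalIntegral.integral_same
    have h4 : (∫ s in Set.Ioc (0:ℝ) 1, (F (s + ε k) - F s) / ε k)
        = (∫ s in (0:ℝ)..1, (F (s + ε k) - F s)) / ε k := by
      rw [intervalIntegral.integral_of_le (by norm_num : (0:ℝ) ≤ 1)]
      rw [integral_div]
    rw [h4, h3, h1, h2, hG1, hG0]
    ring
  -- limit of RHS
  have lim1 : Tendsto (fun k => (G (1 + ε k) - G 1) / ε k) atTop (nhds (F 1)) := by
    have hs : Tendsto (fun k => 1 + ε k) atTop (nhdsWithin (1:ℝ) {(1:ℝ)}ᶜ) := by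
      apply tendsto_nhdsWithin_of_tendsto_nhds_of_eventually_within
      · simpa using (tendsto_const_nhds.add hεlim)
      · filter_upwards with k
        simp only [Set.mem_compl_iff, Set.mem_singleton_iff]
        have := hεpos k; intro h; nlinarith [h]
    have := (hasDerivAt_iff_tendsto_slope.1 (hG 1)).comp hs
    convert this using 2 with k
    simp [slope, hGdef]
    ring
  have lim2 : Tendsto (fun k => (G (0 + ε k) - G 0) / ε k) atTop (nhds (F 0)) := by
    have hs : Tendsto (fun k => 0 + ε k) atTop (nhdsWithin (0:ℝ) {(0:ℝ)}ᶜ) := by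
      apply tendsto_nhdsWithin_of_tendsto_nhds_of_eventually_within
      · simpa using hεlim
      · filter_upwards with k
        simp only [Set.mem_compl_iff, Set.mem_singleton_iff]
        have := hεpos k; intro h; nlinarith [h]
    have := (hasDerivAt_iff_tendsto_slope.1 (hG 0)).comp hs
    convert this using 2 with k
    simp [slope, hGdef]
    ring
  have limR : Tendsto (fun k => (G (1 + ε k) - G 1) / ε k - (G (0 + ε k) - G 0) / ε k)
      atTop (nhds (F 1 - F 0)) := lim1.sub lim2
  -- dominated convergence for LHS
  have limL : Tendsto (fun k => ∫ s in Set.Ioc (0:ℝ) 1, (F (s + ε k) - F s) / ε k)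
      atTop (nhds (∫ s in Set.Ioc (0:ℝ) 1, ψ s)) := by
    apply MeasureTheory.tendsto_integral_of_dominated_convergence (fun _ => (C : ℝ))
    · intro k
      exact (((hFc.comp (continuous_add_right _)).sub hFc).div_const _).aestronglyMeasurable
    · exact integrableOn_const (by simp) (by simp)
    · intro k
      apply ae_of_all
      intro s
      have hb := hF.dist_le_mul (s + ε k) s
      rw [Real.dist_eq, Real.dist_eq] at hb
      have h1 : |s + ε k - s| = ε k := by
        rw [add_sub_cancel_left, abs_of_pos (hεpos k)]
      rw [h1] at hb
      rw [norm_div, Real.norm_eq_abs, Real.norm_eq_abs, abs_of_pos (hεpos k), div_le_iff₀ (hεpos k)]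
      exact hb
    · have hψ' := ae_restrict_of_ae (μ := (volume : Measure ℝ)) (s := Set.Ioc (0:ℝ) 1) hψ
      filter_upwards [hψ'] with s hs
      have hslope := hasDerivAt_iff_tendsto_slope.1 hs
      have hseq : Tendsto (fun k => s + ε k) atTop (nhdsWithin s {s}ᶜ) := by
        apply tendsto_nhdsWithin_of_tendsto_nhds_of_eventually_within
        · simpa using (tendsto_const_nhds.add hεlim)
        · filter_upwards with k
          simp only [Set.mem_compl_iff, Set.mem_singleton_iff]
          have := hεpos k; intro h; nlinarith [h]
      have := hslope.comp hseq
      convert this using 2 with k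
      simp [slope]
      ring
  simp only [key] at limL
  exact tendsto_nhds_unique limR limL

lemma matrix_step {n : ℕ} {K : NNReal} {g : (Fin n → ℝ) → (Fin n → ℝ)}
    (hg : LipschitzWith K g) {x₀ : Fin n → ℝ}
    (hoff : ∀ i j, i ≠ j → 0 ≤ fderiv ℝ g x₀ (Pi.single j 1) i)
    (hcol : ∀ j, ∑ i, fderiv ℝ g x₀ (Pi.single j 1) i ≤ 0)
    (d : Fin n → ℝ) {h : ℝ} (h0 : 0 ≤ h) (h1 : h * K ≤ 1) :
    ∑ i, |d i + h * fderiv ℝ g x₀ d i| ≤ ∑ i, |d i| := by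
  set M := fderiv ℝ g x₀ with hM
  set a : Fin n → Fin n → ℝ := fun i j => M (Pi.single j 1) i with ha
  have hMnorm : ‖M‖ ≤ K := norm_fderiv_le_of_lipschitz ℝ hg
  have habs : ∀ i j, |a i j| ≤ K := by
    intro i j
    calc |a i j| ≤ ‖M (Pi.single j 1)‖ := by
          simpa [Real.norm_eq_abs] using norm_le_pi_norm (M (Pi.single j 1)) i
      _ ≤ ‖M‖ * ‖(Pi.single j 1 : Fin n → ℝ)‖ := M.le_opNorm _
      _ ≤ K := by
          rw [Pi.norm_single]
          simpa using hMnorm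
  set c : Fin n → Fin n → ℝ := fun i j => (if i = j then (1:ℝ) else 0) + h * a i j with hc
  have hcnn : ∀ i j, 0 ≤ c i j := by
    intro i j
    by_cases hij : i = j
    · subst hij
      have hKi : -(K:ℝ) ≤ a i i := (abs_le.1 (habs i i)).1
      have : (0:ℝ) ≤ 1 + h * a i i := by nlinarith [mul_le_mul_of_nonneg_left hKi h0]
      simpa [hc] using this
    · simp only [hc, if_neg hij]
      have := hoff i j hij
      positivity
  have hrep : ∀ i, d i + h * M d i = ∑ j, c i j * d j := by
    intro i
    have hd : d = ∑ j, Pi.single j (d j) := (Finset.univ_sum_single d).symm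
    have hsingle : ∀ j : Fin n, (Pi.single j (d j) : Fin n → ℝ) = d j • (Pi.single j 1 : Fin n → ℝ) := by
      intro j
      funext k
      by_cases hk : k = j
      · subst hk; simp
      · simp [Pi.single_apply, hk]
    have hMd : M d i = ∑ j, a i j * d j := by
      conv_lhs => rw [hd]
      rw [map_sum]
      simp only [Finset.sum_apply]
      apply Finset.sum_congr rfl
      intro j _
      rw [hsingle j, M.map_smul]
      simp [ha, mul_comm]
    simp only [hc, add_mul, Finset.sum_add_distrib, hMd, Finset.mul_sum]
    have : ∑ j, (if i = j then (1:ℝ) else 0) * d j = d i := by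
      simp [Finset.sum_ite_eq]
    rw [this]
    ring_nf
  calc ∑ i, |d i + h * M d i| = ∑ i, |∑ j, c i j * d j| := by
        simp_rw [hrep]
    _ ≤ ∑ i, ∑ j, |c i j * d j| := Finset.sum_le_sum fun i _ => Finset.abs_sum_le_sum_abs _ _
    _ = ∑ j, (∑ i, c i j) * |d j| := by
        rw [Finset.sum_comm]
        apply Finset.sum_congr rfl
        intro j _
        rw [Finset.sum_mul]
        apply Finset.sum_congr rfl
        intro i _
        rw [abs_mul, abs_of_nonneg (hcnn i j)]
    _ ≤ ∑ j, |d j| := by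
        apply Finset.sum_le_sum
        intro j _
        have hcs : ∑ i, c i j ≤ 1 := by
          simp only [hc, Finset.sum_add_distrib]
          have h1' : ∑ i, (if i = j then (1:ℝ) else 0) = 1 := by
            simp [Finset.sum_ite_eq']
          rw [h1', ← Finset.mul_sum]
          have := hcol j
          nlinarith [mul_le_mul_of_nonneg_left this h0]
        nlinarith [abs_nonneg (d j), hcs, Finset.sum_nonneg fun i (_ : i ∈ Finset.univ) => hcnn i j]

lemma core {n : ℕ} {K : NNReal} {g : (Fin n → ℝ) → (Fin n → ℝ)} (hg : LipschitzWith K g)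
    (hae : ∀ᵐ z : (Fin n → ℝ) ∂volume,
      DifferentiableAt ℝ g z ∧
      (∀ i j, i ≠ j → 0 ≤ fderiv ℝ g z (Pi.single j 1) i) ∧
      (∀ j, ∑ i, fderiv ℝ g z (Pi.single j 1) i ≤ 0))
    (u v : Fin n → ℝ) {h : ℝ} (h0 : 0 ≤ h) (h1 : h * K ≤ 1) :
    ∑ i, |u i - v i + h * (g u i - g v i)| ≤ ∑ i, |u i - v i| := by
  classical
  set d : Fin n → ℝ := u - v with hd
  have hdi : ∀ i, d i = u i - v i := fun i => rfl
  set P : (Fin n → ℝ) → Prop := fun z => DifferentiableAt ℝ g z ∧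
      (∀ i j, i ≠ j → 0 ≤ fderiv ℝ g z (Pi.single j 1) i) ∧
      (∀ j, ∑ i, fderiv ℝ g z (Pi.single j 1) i ≤ 0) with hP
  set N := toMeasurable (volume : Measure (Fin n → ℝ)) {z | ¬ P z} with hNdef
  have hNmeas : MeasurableSet N := measurableSet_toMeasurable _ _
  have hN0 : volume N = 0 := by
    rw [hNdef, measure_toMeasurable]
    exact ae_iff.1 hae
  have hsub : ∀ z, z ∉ N → P z := fun z hz => by
    by_contra hc; exact hz (subset_toMeasurable _ _ hc)
  -- Fubini: for a.e. w, a.e. s the point w + v + s • d is good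
  set A : Set (ℝ × (Fin n → ℝ)) := {p | p.2 + v + p.1 • d ∈ N} with hA
  have hcont : Continuous fun p : ℝ × (Fin n → ℝ) => p.2 + v + p.1 • d :=
    (continuous_snd.add continuous_const).add (continuous_fst.smul continuous_const)
  have hAmeas : MeasurableSet A := hcont.measurable hNmeas
  have hA0 : (volume.prod volume) A = 0 := by
    rw [Measure.measure_prod_null hAmeas]
    apply ae_of_all
    intro s
    simp only [Pi.zero_apply]
    have hset : (Prod.mk s ⁻¹' A) = (fun w => w + (v + s • d)) ⁻¹' N := by
      ext w
      simp only [hA, Set.mem_preimage, Set.mem_setOf_eq]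
      rw [add_assoc]
    rw [hset, measure_preimage_add_right]
    exact hN0
  have hB0 : (volume.prod volume) (Prod.swap ⁻¹' A : Set ((Fin n → ℝ) × ℝ)) = 0 := by
    rw [Measure.measurePreserving_swap.measure_preimage hAmeas.nullMeasurableSet]
    exact hA0
  have hae2 : ∀ᵐ w : (Fin n → ℝ) ∂volume, ∀ᵐ s : ℝ ∂volume, P (w + v + s • d) := by
    have hmem : ∀ᵐ p : (Fin n → ℝ) × ℝ ∂(volume.prod volume), p.1 + v + p.2 • d ∉ N := by
      have := measure_eq_zero_iff_ae_notMem.1 hB0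
      filter_upwards [this] with p hp
      exact hp
    have h2 := Measure.ae_ae_of_ae_prod hmem
    filter_upwards [h2] with w hw
    filter_upwards [hw] with s hs
    exact hsub _ hs
  -- the inequality holds for a.e. translate w
  have hQae : ∀ᵐ w : (Fin n → ℝ) ∂volume,
      ∑ i, |u i - v i + h * (g (w + u) i - g (w + v) i)| ≤ ∑ i, |u i - v i| := by
    filter_upwards [hae2] with w hw
    set cc : Fin n → ℝ := w + v with hcc
    set L : ℝ → (Fin n → ℝ) := fun s => cc + s • d with hL
    have hL0 : L 0 = w + v := by simp [hL, hcc]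
    have hL1 : L 1 = w + u := by
      funext i
      simp only [hL, hcc, Pi.add_apply, Pi.smul_apply, one_smul, hdi]
      ring
    have hLmeas : Measurable L :=
      (continuous_const.add (continuous_id.smul continuous_const)).measurable
    have hLlip : LipschitzWith ‖d‖₊ L := by
      apply LipschitzWith.of_dist_le_mul
      intro s t
      rw [hL]
      simp only
      rw [dist_add_left, dist_eq_norm, ← sub_smul, norm_smul, Real.norm_eq_abs, Real.dist_eq,
        coe_nnnorm, mul_comm]
    set Φ : ℝ → (Fin n → ℝ) := fun s => fderiv ℝ g (L s) d with hΦ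
    have hΦmeas : ∀ i, Measurable fun s => Φ s i := fun i =>
      (measurable_pi_apply i).comp ((measurable_fderiv_apply_const ℝ g d).comp hLmeas)
    have hΦbdd : ∀ i s, |Φ s i| ≤ (K : ℝ) * ‖d‖ := by
      intro i s
      calc |Φ s i| ≤ ‖fderiv ℝ g (L s) d‖ := by
            simpa [Real.norm_eq_abs] using norm_le_pi_norm (fderiv ℝ g (L s) d) i
        _ ≤ ‖fderiv ℝ g (L s)‖ * ‖d‖ := (fderiv ℝ g (L s)).le_opNorm d
        _ ≤ (K : ℝ) * ‖d‖ := by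
            gcongr
            exact norm_fderiv_le_of_lipschitz ℝ hg
    have hderiv : ∀ᵐ s : ℝ ∂volume, ∀ i, HasDerivAt (fun t => g (L t) i) (Φ s i) s := by
      filter_upwards [hw] with s hs
      have hline : HasDerivAt L d s := by
        have h1' : HasDerivAt (fun t : ℝ => t • d) ((1 : ℝ) • d) s := (hasDerivAt_id s).smul_const d
        have h2' := h1'.const_add cc
        rw [one_smul] at h2'
        exact h2'
      have hgd : HasDerivAt (fun t => g (L t)) (fderiv ℝ g (L s) d) s :=
        hs.1.hasFDerivAt.comp_hasDerivAt s hline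
      intro i
      have hproj := (ContinuousLinearMap.proj (R := ℝ) (φ := fun _ : Fin n => ℝ) i).hasFDerivAt.comp_hasDerivAt s hgd
      exact hproj
    have hFTC : ∀ i, g (w + u) i - g (w + v) i = ∫ s in Set.Ioc (0:ℝ) 1, Φ s i := by
      intro i
      have heval : LipschitzWith 1 (fun z : Fin n → ℝ => z i) := by
        apply LipschitzWith.of_dist_le_mul
        intro a b
        simpa using dist_le_pi_dist a b i
      have hFlip : LipschitzWith (1 * K * ‖d‖₊) (fun s => g (L s) i) :=
        ((heval.comp hg).comp hLlip)
      have hψ : ∀ᵐ s : ℝ ∂volume, HasDerivAt (fun t => g (L t) i) (Φ s i) s := by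
        filter_upwards [hderiv] with s hs using hs i
      have := ftc_lip hFlip (hΦmeas i) hψ
      rw [hL1, hL0] at this
      exact this
    have hΦint : ∀ i, IntegrableOn (fun s => Φ s i) (Set.Ioc (0:ℝ) 1) volume := by
      intro i
      apply Integrable.mono' (integrable_const ((K : ℝ) * ‖d‖))
      · exact (hΦmeas i).aestronglyMeasurable
      · exact ae_of_all _ fun s => by rw [Real.norm_eq_abs]; exact hΦbdd i s
    have hrep : ∀ i, u i - v i + h * (g (w + u) i - g (w + v) i)
        = ∫ s in Set.Ioc (0:ℝ) 1, (d i + h * Φ s i) := by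
      intro i
      rw [hFTC i, integral_add (integrableOn_const (by simp) (by simp) : IntegrableOn (fun _ => d i) (Set.Ioc (0:ℝ) 1) volume)
        ((hΦint i).const_mul h), integral_const_mul, setIntegral_const]
      simp [Real.volume_Ioc, hdi]
    have habs_int : ∀ i, IntegrableOn (fun s => |d i + h * Φ s i|) (Set.Ioc (0:ℝ) 1) volume :=
      fun i => (((integrableOn_const (by simp) (by simp)).add ((hΦint i).const_mul h))).abs
    calc ∑ i, |u i - v i + h * (g (w + u) i - g (w + v) i)|
        = ∑ i, |∫ s in Set.Ioc (0:ℝ) 1, (d i + h * Φ s i)| := by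
          apply Finset.sum_congr rfl
          intro i _
          rw [hrep i]
      _ ≤ ∑ i, ∫ s in Set.Ioc (0:ℝ) 1, |d i + h * Φ s i| := by
          apply Finset.sum_le_sum
          intro i _
          simpa [Real.norm_eq_abs] using
            norm_integral_le_integral_norm (μ := volume.restrict (Set.Ioc (0:ℝ) 1))
              (fun s => d i + h * Φ s i)
      _ = ∫ s in Set.Ioc (0:ℝ) 1, ∑ i, |d i + h * Φ s i| :=
          (integral_finset_sum Finset.univ fun i _ => habs_int i).symm
      _ ≤ ∫ s in Set.Ioc (0:ℝ) 1, ∑ i, |d i| := by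
          apply integral_mono_ae (integrable_finset_sum Finset.univ fun i _ => habs_int i)
            (integrableOn_const (by simp) (by simp))
          filter_upwards [ae_restrict_of_ae hw] with s hs
          exact matrix_step hg hs.2.1 hs.2.2 d h0 h1
      _ = ∑ i, |d i| := by
          rw [setIntegral_const]
          simp [Real.volume_Ioc]
      _ = ∑ i, |u i - v i| := by
          apply Finset.sum_congr rfl
          intro i _
          rw [hdi]
  -- conclude at w = 0 by continuity and positivity of volume on open sets
  by_contra hcon
  push_neg at hcon
  have hgc : Continuous g := hg.continuous
  set f : (Fin n → ℝ) → ℝ :=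
    fun w => ∑ i, |u i - v i + h * (g (w + u) i - g (w + v) i)| with hf
  have hfc : Continuous f := by
    apply continuous_finset_sum
    intro i _
    apply Continuous.abs
    apply Continuous.add continuous_const
    apply Continuous.mul continuous_const
    apply Continuous.sub
    · exact (continuous_apply i).comp (hgc.comp (continuous_id.add continuous_const))
    · exact (continuous_apply i).comp (hgc.comp (continuous_id.add continuous_const))
  set U := f ⁻¹' Set.Ioi (∑ i, |u i - v i|) with hU
  have hUopen : IsOpen U := isOpen_Ioi.preimage hfc
  have h0U : (0 : Fin n → ℝ) ∈ U := by
    simp only [hU, hf, Set.mem_preimage, Set.mem_Ioi]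
    simpa using hcon
  have hUnull : volume U = 0 := by
    apply measure_mono_null _ (ae_iff.1 hQae)
    intro w hw
    simp only [Set.mem_setOf_eq, not_le]
    exact hw
  exact hUopen.measure_ne_zero volume ⟨0, h0U⟩ hUnull

end Auxiliary

open Filter Set in
/-- l1-contraction principle for monotone compartmental systems: the l¹
distance between two solutions is nonincreasing. -/
theorem stmt_3 (n : ℕ) (K : NNReal)
    (g : (Fin n → ℝ) → (Fin n → ℝ)) (hg : LipschitzWith K g)
    (hae : ∀ᵐ x : (Fin n → ℝ) ∂volume,
      DifferentiableAt ℝ g x ∧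
      (∀ i j, i ≠ j → 0 ≤ fderiv ℝ g x (Pi.single j 1) i) ∧
      (∀ j, ∑ i, fderiv ℝ g x (Pi.single j 1) i ≤ 0))
    (T : ℝ) (x y : ℝ → Fin n → ℝ)
    (hx : ∀ t ∈ Set.Icc (0 : ℝ) T, HasDerivAt x (g (x t)) t)
    (hy : ∀ t ∈ Set.Icc (0 : ℝ) T, HasDerivAt y (g (y t)) t) :
    AntitoneOn (fun t => ∑ i, |x t i - y t i|) (Set.Icc (0 : ℝ) T) := by
  set φ : ℝ → ℝ := fun t => ∑ i, |x t i - y t i| with hφ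
  intro t₁ ht₁ t₂ ht₂ h12
  show φ t₂ ≤ φ t₁
  -- continuity of φ on [t₁, t₂]
  have hsubset : Set.Icc t₁ t₂ ⊆ Set.Icc 0 T := fun t ht =>
    ⟨le_trans ht₁.1 ht.1, le_trans ht.2 ht₂.2⟩
  have hφcont : ContinuousOn φ (Set.Icc t₁ t₂) := by
    intro t ht
    apply ContinuousAt.continuousWithinAt
    have hxc : ContinuousAt x t := (hx t (hsubset ht)).continuousAt
    have hyc : ContinuousAt y t := (hy t (hsubset ht)).continuousAt
    have houter : Continuous fun v : Fin n → ℝ => ∑ i, |v i| :=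
      continuous_finset_sum _ fun i _ => (continuous_apply i).abs
    have : ContinuousAt (fun t => ∑ i, |(x t - y t) i|) t :=
      houter.continuousAt.comp (hxc.sub hyc)
    simpa using this
  -- the slope bound
  have bound : ∀ τ ∈ Set.Ico t₁ t₂, ∀ r : ℝ, (0:ℝ) < r →
      ∃ᶠ z in nhdsWithin τ (Set.Ioi τ), slope φ τ z < r := by
    intro τ hτ r hr
    have hτIcc : τ ∈ Set.Icc (0:ℝ) T := ⟨le_trans ht₁.1 hτ.1, le_trans hτ.2.le ht₂.2⟩
    set c : Fin n → ℝ := fun i => g (x τ) i - g (y τ) i with hc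
    have hcomp : ∀ i : Fin n, HasDerivAt (fun t => x t i - y t i) (c i) τ := by
      intro i
      have hxi : HasDerivAt (fun t => x t i) (g (x τ) i) τ := by
        have := (ContinuousLinearMap.proj (R := ℝ) (φ := fun _ : Fin n => ℝ) i).hasFDerivAt.comp_hasDerivAt τ (hx τ hτIcc)
        exact this
      have hyi : HasDerivAt (fun t => y t i) (g (y τ) i) τ := by
        have := (ContinuousLinearMap.proj (R := ℝ) (φ := fun _ : Fin n => ℝ) i).hasFDerivAt.comp_hasDerivAt τ (hy τ hτIcc)
        exact this
      exact hxi.sub hyi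
    set E : ℝ → ℝ := fun z => ∑ i, |slope (fun t => x t i - y t i) τ z - c i| with hE
    have hEto : Tendsto E (nhdsWithin τ (Set.Ioi τ)) (nhds 0) := by
      have : Tendsto E (nhdsWithin τ {τ}ᶜ) (nhds 0) := by
        have h0 : (0:ℝ) = ∑ i : Fin n, |(c i) - c i| := by simp
        rw [h0]
        apply tendsto_finset_sum
        intro i _
        have hsl := hasDerivAt_iff_tendsto_slope.1 (hcomp i)
        have := (hsl.sub_const (c i)).abs
        simpa using this
      exact this.mono_left (nhdsWithin_mono τ fun z hz => Set.mem_compl_singleton_iff.2 (ne_of_gt hz))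
    have hev1 : ∀ᶠ z in nhdsWithin τ (Set.Ioi τ), E z < r :=
      hEto.eventually (Filter.Tendsto.eventually_lt_const hr tendsto_id) |>.mono (fun z hz => hz)
    have hKpos : (0:ℝ) < (K:ℝ) + 1 := by positivity
    have hev2 : ∀ᶠ z in nhdsWithin τ (Set.Ioi τ), z ∈ Set.Ioo τ (τ + 1/((K:ℝ)+1)) :=
      Ioo_mem_nhdsGT_of_mem ⟨le_refl τ, by linarith [one_div_pos.2 hKpos]⟩
    apply (hev1.and hev2).frequently.mono
    rintro z ⟨hzr, hzmem⟩
    -- show slope φ τ z < r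
    have hzpos : 0 < z - τ := sub_pos.2 hzmem.1
    have hhK : (z - τ) * K ≤ 1 := by
      have hzb : z - τ ≤ 1/((K:ℝ)+1) := by linarith [hzmem.2]
      have : (z - τ) * (K:ℝ) ≤ (1/((K:ℝ)+1)) * (K:ℝ) :=
        mul_le_mul_of_nonneg_right hzb K.2
      have h2 : (1/((K:ℝ)+1)) * (K:ℝ) ≤ 1 := by
        rw [div_mul_eq_mul_div, mul_comm]
        rw [div_le_one hKpos]
        linarith
      linarith
    have hB := core hg hae (x τ) (y τ) hzpos.le hhK
    have hstep : φ z - φ τ ≤ (z - τ) * E z := by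
      have hφz : φ z ≤ (z - τ) * E z + ∑ i, |x τ i - y τ i + (z - τ) * (g (x τ) i - g (y τ) i)| := by
        have : ∀ i, |x z i - y z i| ≤
            (z - τ) * |slope (fun t => x t i - y t i) τ z - c i|
            + |x τ i - y τ i + (z - τ) * (g (x τ) i - g (y τ) i)| := by
          intro i
          have hA : x z i - y z i =
              ((x z i - y z i) - (x τ i - y τ i) - (z - τ) * c i)
              + (x τ i - y τ i + (z - τ) * c i) := by ring
          have habs : |x z i - y z i| ≤ |(x z i - y z i) - (x τ i - y τ i) - (z - τ) * c i|
              + |x τ i - y τ i + (z - τ) * c i| := by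
            conv_lhs => rw [hA]
            exact abs_add_le _ _
          have hne : z - τ ≠ 0 := ne_of_gt hzpos
          have hmul : (z - τ) * (slope (fun t => x t i - y t i) τ z - c i)
              = (x z i - y z i) - (x τ i - y τ i) - (z - τ) * c i := by
            rw [slope_def_field]
            field_simp
          have hAeq : |(x z i - y z i) - (x τ i - y τ i) - (z - τ) * c i|
              = (z - τ) * |slope (fun t => x t i - y t i) τ z - c i| := by
            rw [← hmul, abs_mul, abs_of_pos hzpos]
          rw [hAeq] at habs
          exact habs
        calc φ z = ∑ i, |x z i - y z i| := rfl
          _ ≤ ∑ i, ((z - τ) * |slope (fun t => x t i - y t i) τ z - c i|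
              + |x τ i - y τ i + (z - τ) * (g (x τ) i - g (y τ) i)|) :=
            Finset.sum_le_sum fun i _ => this i
          _ = (z - τ) * E z + ∑ i, |x τ i - y τ i + (z - τ) * (g (x τ) i - g (y τ) i)| := by
            rw [Finset.sum_add_distrib, Finset.mul_sum]
      have : φ z ≤ (z - τ) * E z + φ τ := le_trans hφz (by linarith [hB])
      linarith
    have : slope φ τ z ≤ E z := by
      rw [slope_def_field, div_le_iff₀ hzpos]
      calc φ z - φ τ ≤ (z - τ) * E z := hstep
        _ = E z * (z - τ) := mul_comm _ _
    linarith
  -- apply the fencing theorem with constant boundary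
  have := image_le_of_liminf_slope_right_le_deriv_boundary (f := φ) (a := t₁) (b := t₂)
    hφcont (B := fun _ => φ t₁) (B' := fun _ => 0) le_rfl continuousOn_const
    (fun τ _ => hasDerivWithinAt_const τ _ _)
    (fun τ hτ r hr => bound τ hτ r hr)
  exact this ⟨h12, le_refl t₂⟩
end

section
/- Let g : ℝⁿ → ℝⁿ be a Lipschitz vector field with nonnegative off-diagonal partial derivatives almost everywhere (∂gᵢ/∂xⱼ(x) ≥ 0 for all i ≠ j, a.e. x). If x(t), y(t) are solutions of ż = g(z) on [0,T] with x(0) ≤ y(0) componentwise, then x(t) ≤ y(t) componentwise for all t ∈ [0,T]. -/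
open MeasureTheory Set Filter Metric Topology
open scoped NNReal

lemma kamke_quasi {n : ℕ} {K : NNReal} {g : (Fin n → ℝ) → (Fin n → ℝ)}
    (hg : LipschitzWith K g)
    (hae : ∀ᵐ x : (Fin n → ℝ) ∂volume,
      DifferentiableAt ℝ g x ∧
      ∀ i j, i ≠ j → 0 ≤ fderiv ℝ g x (Pi.single j 1) i)
    {u v : Fin n → ℝ} (huv : ∀ j, u j ≤ v j) {i : Fin n} (hi : u i = v i) :
    g u i ≤ g v i := by
  classical
  set d : Fin n → ℝ := v - u with hd
  have hdsum : d = ∑ j, d j • (Pi.single j 1 : Fin n → ℝ) := by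
    funext k
    simp [Finset.sum_apply, Pi.single_apply]
  have main : ∀ ε : ℝ, 0 < ε → g u i ≤ g v i + 2 * K * ε := by
    intro ε hε
    set A : Set (Fin n → ℝ) := Metric.ball 0 ε with hA
    have hμfin : volume A < ⊤ := measure_ball_lt_top
    set h : ℝ → ℝ := fun t => ∫ y in A, g (u + t • d - y) i with hh
    -- integrability of the integrand, any t
    have hF_int : ∀ t : ℝ, IntegrableOn (fun y => g (u + t • d - y) i) A volume := by
      intro t
      have hc : Continuous fun y : Fin n → ℝ => g (u + t • d - y) i :=
        (continuous_apply i).comp (hg.continuous.comp (continuous_const.sub continuous_id))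
      exact (hc.continuousOn.integrableOn_compact (isCompact_closedBall (0:Fin n → ℝ) ε)).mono_set
        ball_subset_closedBall
    -- a.e. goodness after reflection-translation
    have htrans : ∀ c : Fin n → ℝ, ∀ᵐ y : (Fin n → ℝ) ∂volume,
        DifferentiableAt ℝ g (c - y) ∧
        ∀ i j, i ≠ j → 0 ≤ fderiv ℝ g (c - y) (Pi.single j 1) i := by
      intro c
      exact (quasiMeasurePreserving_sub_left (μ := (volume : Measure (Fin n → ℝ))) c).ae hae
    -- derivative of h at every point, with nonneg value
    have hderiv : ∀ t₀ : ℝ,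
        HasDerivAt h (∫ y in A, fderiv ℝ g (u + t₀ • d - y) d i) t₀ ∧
        0 ≤ ∫ y in A, fderiv ℝ g (u + t₀ • d - y) d i := by
      intro t₀
      set c : Fin n → ℝ := u + t₀ • d with hc
      have hgood : ∀ᵐ y ∂(volume.restrict A),
          DifferentiableAt ℝ g (c - y) ∧
          ∀ i j, i ≠ j → 0 ≤ fderiv ℝ g (c - y) (Pi.single j 1) i :=
        ae_restrict_of_ae (htrans c)
      have hnonneg : ∀ᵐ y ∂(volume.restrict A), 0 ≤ fderiv ℝ g (u + t₀ • d - y) d i := by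
        filter_upwards [hgood] with y hy
        have hexp : fderiv ℝ g (c - y) d i
            = ∑ j, d j * (fderiv ℝ g (c - y) (Pi.single j 1) i) := by
          conv_lhs => rw [hdsum]
          rw [map_sum]
          simp [Finset.sum_apply, _root_.map_smul]
        have : (0:ℝ) ≤ fderiv ℝ g (c - y) d i := by
          rw [hexp]
          apply Finset.sum_nonneg
          intro j _
          by_cases hji : j = i
          · subst hji
            have : d j = 0 := by simp [hd, hi]
            simp [this]
          · exact mul_nonneg (by simp [hd, sub_nonneg.2 (huv j)]) (hy.2 i j (Ne.symm hji))
        simpa [hc] using this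
      have hder := hasDerivAt_integral_of_dominated_loc_of_lip
        (F := fun t y => g (u + t • d - y) i)
        (F' := fun y => fderiv ℝ g (u + t₀ • d - y) d i)
        (μ := volume.restrict A) (x₀ := t₀)
        (bound := fun _ => (K : ℝ) * ‖d‖) (Metric.ball_mem_nhds t₀ one_pos)
        (Eventually.of_forall fun t =>
          (((continuous_apply i).comp (hg.continuous.comp
            (continuous_const.sub continuous_id))).aestronglyMeasurable))
        (hF_int t₀)
        (((((measurable_pi_apply i).comp (measurable_fderiv_apply_const ℝ g d)).comp
          (measurable_const.sub measurable_id)).aestronglyMeasurable))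
        (Eventually.of_forall fun y => by
          have : LipschitzWith (Real.nnabs ((K : ℝ) * ‖d‖))
              (fun t : ℝ => g (u + t • d - y) i) := by
            apply LipschitzWith.of_dist_le_mul
            intro s t
            have h1 : dist (g (u + s • d - y) i) (g (u + t • d - y) i)
                ≤ dist (g (u + s • d - y)) (g (u + t • d - y)) := dist_le_pi_dist _ _ i
            have h2 : dist (g (u + s • d - y)) (g (u + t • d - y))
                ≤ K * dist (u + s • d - y) (u + t • d - y) := hg.dist_le_mul _ _
            have h3 : dist (u + s • d - y) (u + t • d - y) = dist s t * ‖d‖ := by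
              simp only [dist_eq_norm]
              have : (u + s • d - y) - (u + t • d - y) = (s - t) • d := by
                module
              rw [this, norm_smul, Real.norm_eq_abs]
            have habs : ((Real.nnabs ((K:ℝ) * ‖d‖) : ℝ≥0) : ℝ) = (K:ℝ) * ‖d‖ := by
              rw [Real.coe_nnabs, abs_of_nonneg (by positivity)]
            calc dist (g (u + s • d - y) i) (g (u + t • d - y) i)
                ≤ K * (dist s t * ‖d‖) := by rw [← h3]; exact h1.trans h2
              _ = (Real.nnabs ((K:ℝ) * ‖d‖) : ℝ) * dist s t := by rw [habs]; ring
          exact this.lipschitzOnWith)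
        ((integrableOn_const hμfin.ne))
        (by
          filter_upwards [hgood] with y hy
          have hline : HasDerivAt (fun t : ℝ => u + t • d - y) d t₀ := by
            have h1 : HasDerivAt (fun t : ℝ => t • d) ((1:ℝ) • d) t₀ :=
              (hasDerivAt_id t₀).smul_const d
            simpa using (h1.const_add u).sub_const y
          have h2 : HasDerivAt (fun t : ℝ => g (u + t • d - y))
              (fderiv ℝ g (c - y) d) t₀ := by
            have := hy.1.hasFDerivAt.comp_hasDerivAt t₀ hline
            simpa [hc, Function.comp_def] using this
          have h3 := (ContinuousLinearMap.proj (R := ℝ) (φ := fun _ : Fin n => ℝ) i)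
            |>.hasFDerivAt.comp_hasDerivAt t₀ h2
          simpa [hc, Function.comp_def] using h3)
      refine ⟨hder.2, integral_nonneg_of_ae hnonneg⟩
    have hmono : h 0 ≤ h 1 := by
      have hdiff : Differentiable ℝ h := fun t => (hderiv t).1.differentiableAt
      have hmono' : Monotone h := by
        apply monotone_of_deriv_nonneg hdiff
        intro t
        rw [(hderiv t).1.deriv]
        exact (hderiv t).2
      exact hmono' zero_le_one
    -- closeness to pointwise values
    set M : ℝ := (volume A).toReal with hM
    have hMpos : 0 < M := by
      apply ENNReal.toReal_pos _ hμfin.ne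
      exact (measure_ball_pos volume 0 hε).ne'
    have hclose : ∀ t : ℝ, |h t - M * g (u + t • d) i| ≤ (K : ℝ) * ε * M := by
      intro t
      have heq : h t - M * g (u + t • d) i
          = ∫ y in A, (g (u + t • d - y) i - g (u + t • d) i) := by
        rw [integral_sub (hF_int t) (integrableOn_const hμfin.ne)]
        rw [setIntegral_const, smul_eq_mul]
        rfl
      rw [heq]
      have := norm_setIntegral_le_of_norm_le_const (μ := volume) (s := A)
        (f := fun y => g (u + t • d - y) i - g (u + t • d) i) (C := (K:ℝ) * ε) hμfin
        (fun y hy => by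
          have h1 : |g (u + t • d - y) i - g (u + t • d) i|
              ≤ ‖g (u + t • d - y) - g (u + t • d)‖ := by
            have := norm_le_pi_norm (g (u + t • d - y) - g (u + t • d)) i
            simpa [Real.norm_eq_abs] using this
          have h2 : ‖g (u + t • d - y) - g (u + t • d)‖
              ≤ K * ‖(u + t • d - y) - (u + t • d)‖ := by
            simpa [dist_eq_norm] using hg.dist_le_mul (u + t • d - y) (u + t • d)
          have h3 : ‖(u + t • d - y) - (u + t • d)‖ = ‖y‖ := by
            rw [show (u + t • d - y) - (u + t • d) = -y by abel]
            rw [norm_neg]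
          have h4 : ‖y‖ ≤ ε := by
            have := mem_ball.1 hy
            rw [dist_zero_right] at this
            exact this.le
          calc ‖g (u + t • d - y) i - g (u + t • d) i‖
              = |g (u + t • d - y) i - g (u + t • d) i| := rfl
            _ ≤ K * ‖y‖ := h1.trans (h2.trans (by rw [h3]))
            _ ≤ K * ε := by gcongr
        )
      simpa [hM, Real.norm_eq_abs, measureReal_def] using this
    have h0u : u + (0:ℝ) • d = u := by simp
    have h1v : u + (1:ℝ) • d = v := by simp [hd]
    have c0 := hclose 0
    have c1 := hclose 1
    rw [h0u] at c0
    rw [h1v] at c1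
    have e0 := abs_le.1 c0
    have e1 := abs_le.1 c1
    have : M * g u i ≤ M * (g v i + 2 * K * ε) := by nlinarith [hmono]
    exact le_of_mul_le_mul_left (by linarith [this]) hMpos
  have hK0 : (0:ℝ) ≤ K := K.coe_nonneg
  apply le_of_forall_pos_le_add
  intro δ hδ
  have hεpos : 0 < δ / (2 * K + 1) := by positivity
  have := main (δ / (2 * K + 1)) hεpos
  have h2 : 2 * (K:ℝ) * (δ / (2 * K + 1)) ≤ δ := by
    have he : 2 * (K:ℝ) * (δ / (2 * K + 1)) = (2 * K * δ) / (2 * K + 1) := by ring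
    rw [he, div_le_iff₀ (by positivity : (0:ℝ) < 2 * (K:ℝ) + 1)]
    nlinarith
  linarith


/-- Kamke's comparison theorem for cooperative systems: componentwise order is
preserved along solutions. -/
theorem stmt_4 (n : ℕ) (K : NNReal)
    (g : (Fin n → ℝ) → (Fin n → ℝ)) (hg : LipschitzWith K g)
    (hae : ∀ᵐ x : (Fin n → ℝ) ∂volume,
      DifferentiableAt ℝ g x ∧
      ∀ i j, i ≠ j → 0 ≤ fderiv ℝ g x (Pi.single j 1) i)
    (T : ℝ) (x y : ℝ → Fin n → ℝ)
    (hx : ∀ t ∈ Set.Icc (0 : ℝ) T, HasDerivAt x (g (x t)) t)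
    (hy : ∀ t ∈ Set.Icc (0 : ℝ) T, HasDerivAt y (g (y t)) t)
    (h0 : ∀ i, x 0 i ≤ y 0 i) :
    ∀ t ∈ Set.Icc (0 : ℝ) T, ∀ i, x t i ≤ y t i := by
  classical
  have hK0 : (0:ℝ) ≤ K := K.coe_nonneg
  set C : ℝ := n * K with hC
  have hC0 : 0 ≤ C := by positivity
  set f : ℝ → ℝ := fun t => ∑ i, max (x t i - y t i) 0 with hf
  have hf_nonneg : ∀ t, 0 ≤ f t := fun t => Finset.sum_nonneg fun i _ => le_max_right _ _
  have hterm_le : ∀ t (i : Fin n), max (x t i - y t i) 0 ≤ f t := fun t i =>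
    Finset.single_le_sum (f := fun j => max (x t j - y t j) 0)
      (fun j _ => le_max_right _ _) (Finset.mem_univ i)
  -- componentwise derivatives
  have hcomp : ∀ t ∈ Set.Icc (0:ℝ) T, ∀ i : Fin n,
      HasDerivAt (fun z => x z i - y z i) (g (x t) i - g (y t) i) t := by
    intro t ht i
    have hxi : HasDerivAt (fun z => x z i) (g (x t) i) t := by
      have := (ContinuousLinearMap.proj (R := ℝ) (φ := fun _ : Fin n => ℝ) i)
        |>.hasFDerivAt.comp_hasDerivAt t (hx t ht)
      simpa [Function.comp_def] using this
    have hyi : HasDerivAt (fun z => y z i) (g (y t) i) t := by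
      have := (ContinuousLinearMap.proj (R := ℝ) (φ := fun _ : Fin n => ℝ) i)
        |>.hasFDerivAt.comp_hasDerivAt t (hy t ht)
      simpa [Function.comp_def] using this
    exact hxi.sub hyi
  -- key derivative bound from quasimonotonicity
  have key : ∀ t ∈ Set.Icc (0:ℝ) T, ∀ i : Fin n, y t i ≤ x t i →
      g (x t) i - g (y t) i ≤ K * f t := by
    intro t ht i hit
    set a := x t with ha
    set b := y t with hb
    set w : Fin n → ℝ := fun j => if j = i then b i else min (a j) (b j) with hw
    have hw_le : ∀ j, w j ≤ b j := by
      intro j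
      by_cases hj : j = i
      · simp [hw, hj]
      · simp [hw, hj, min_le_right]
    have hwi : w i = b i := by simp [hw]
    have hq : g w i ≤ g b i := kamke_quasi hg hae hw_le hwi
    have haw : ∀ j, (a - w) j = max (a j - b j) 0 := by
      intro j
      by_cases hj : j = i
      · subst hj
        rw [Pi.sub_apply, hwi, max_eq_left (by linarith)]
      · simp only [Pi.sub_apply, hw, if_neg hj]
        rcases le_total (a j) (b j) with h | h
        · rw [min_eq_left h, sub_self, max_eq_right (by linarith)]
        · rw [min_eq_right h, max_eq_left (by linarith)]
    have hnorm : ‖a - w‖ ≤ f t := by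
      rw [pi_norm_le_iff_of_nonneg (hf_nonneg t)]
      intro j
      rw [haw j, Real.norm_eq_abs, abs_of_nonneg (le_max_right _ _)]
      exact hterm_le t j
    have h1 : g a i - g w i ≤ K * f t := by
      have e1 : g a i - g w i ≤ |(g a - g w) i| := by
        rw [Pi.sub_apply]; exact le_abs_self _
      have e2 : |(g a - g w) i| ≤ ‖g a - g w‖ := by
        simpa [Real.norm_eq_abs] using norm_le_pi_norm (g a - g w) i
      have e3 : ‖g a - g w‖ ≤ K * ‖a - w‖ := by
        simpa [dist_eq_norm] using hg.dist_le_mul a w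
      calc g a i - g w i ≤ ‖g a - g w‖ := e1.trans e2
        _ ≤ K * ‖a - w‖ := e3
        _ ≤ K * f t := by gcongr
    linarith
  -- continuity of f on Icc
  have hfc : ContinuousOn f (Set.Icc 0 T) := by
    apply continuousOn_finset_sum
    intro i _
    intro t ht
    have hxct : ContinuousWithinAt (fun z => x z i - y z i) (Set.Icc 0 T) t :=
      ((hcomp t ht i).continuousAt).continuousWithinAt
    exact hxct.max continuousWithinAt_const
  -- initial bound
  have h00 : f 0 ≤ 0 := by
    apply le_of_eq
    apply Finset.sum_eq_zero
    intro i _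
    exact max_eq_right (by linarith [h0 i])
  -- liminf condition
  have hliminf : ∀ t ∈ Set.Ico (0:ℝ) T, ∀ r : ℝ, C * f t < r →
      ∃ᶠ z in 𝓝[>] t, (z - t)⁻¹ * (f z - f t) < r := by
    intro t ht r hr
    have htIcc : t ∈ Set.Icc (0:ℝ) T := ⟨ht.1, ht.2.le⟩
    set σ : ℝ := r - C * f t with hσ
    have hσpos : 0 < σ := by simp [hσ]; linarith
    set σ' : ℝ := σ / (2 * (n + 1)) with hσ'
    have hσ'pos : 0 < σ' := by positivity
    have hEi : ∀ i : Fin n, ∀ᶠ z in 𝓝[>] t,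
        max (x z i - y z i) 0 - max (x t i - y t i) 0
          ≤ (z - t) * ((K : ℝ) * f t + σ') := by
      intro i
      rcases lt_or_ge (x t i - y t i) 0 with hneg | hpos
      · -- negative case: eventually still negative
        have hcont : ContinuousAt (fun z => x z i - y z i) t := (hcomp t htIcc i).continuousAt
        have hev : ∀ᶠ z in 𝓝 t, x z i - y z i < 0 :=
          hcont.eventually_lt_const hneg
        filter_upwards [nhdsWithin_le_nhds hev, self_mem_nhdsWithin] with z hz hzt
        rw [max_eq_right hz.le, max_eq_right hneg.le]
        have : (0:ℝ) ≤ (z - t) * ((K : ℝ) * f t + σ') := by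
          apply mul_nonneg (by simp at hzt; linarith)
          have : 0 ≤ (K:ℝ) * f t := mul_nonneg hK0 (hf_nonneg t)
          linarith
        linarith
      · -- nonnegative case: use derivative bound
        have hb : g (x t) i - g (y t) i ≤ K * f t := key t htIcc i (by linarith)
        have hder := hcomp t htIcc i
        have hlo := hasDerivAt_iff_isLittleO.1 hder
        have hev := hlo.def hσ'pos
        filter_upwards [nhdsWithin_le_nhds hev, self_mem_nhdsWithin] with z hz hzt
        have hztpos : 0 < z - t := by simp at hzt; linarith
        rw [Real.norm_eq_abs, Real.norm_eq_abs] at hz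
        have habs := (abs_le.1 hz).2
        rw [abs_of_pos hztpos] at habs
        have hzle : x z i - y z i ≤ (x t i - y t i) + (z - t) * ((K:ℝ) * f t + σ') := by
          have : x z i - y z i - (x t i - y t i) - (z - t) * (g (x t) i - g (y t) i)
              ≤ σ' * (z - t) := by simpa [smul_eq_mul] using habs
          nlinarith
        have hrhs : 0 ≤ (x t i - y t i) + (z - t) * ((K:ℝ) * f t + σ') := by
          have : 0 ≤ (K:ℝ) * f t := mul_nonneg hK0 (hf_nonneg t)
          nlinarith
        rw [max_eq_left hpos]
        have hmax : max (x z i - y z i) 0 ≤ (x t i - y t i) + (z - t) * ((K:ℝ) * f t + σ') :=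
          max_le hzle hrhs
        linarith
    have hall : ∀ᶠ z in 𝓝[>] t, ∀ i : Fin n,
        max (x z i - y z i) 0 - max (x t i - y t i) 0
          ≤ (z - t) * ((K : ℝ) * f t + σ') := eventually_all.2 hEi
    apply Eventually.frequently
    filter_upwards [hall, self_mem_nhdsWithin] with z hz hzt
    have hztpos : 0 < z - t := by simp at hzt; linarith
    have hsum : f z - f t ≤ n * ((z - t) * ((K : ℝ) * f t + σ')) := by
      have : f z - f t = ∑ i, (max (x z i - y z i) 0 - max (x t i - y t i) 0) := by
        rw [hf, ← Finset.sum_sub_distrib]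
      rw [this]
      calc ∑ i, (max (x z i - y z i) 0 - max (x t i - y t i) 0)
          ≤ ∑ _i : Fin n, (z - t) * ((K : ℝ) * f t + σ') := Finset.sum_le_sum fun i _ => hz i
        _ = n * ((z - t) * ((K : ℝ) * f t + σ')) := by simp [mul_comm]
    have hnσ' : (n : ℝ) * σ' ≤ σ / 2 := by
      have he : (n:ℝ) * σ' = σ * n / (2 * (n + 1)) := by rw [hσ']; ring
      rw [he, div_le_div_iff₀ (by positivity) (by norm_num)]
      nlinarith [Nat.cast_nonneg (α := ℝ) n, hσpos]
    have hslope : (z - t)⁻¹ * (f z - f t) ≤ C * f t + σ / 2 := by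
      rw [inv_mul_le_iff₀ hztpos]
      calc f z - f t ≤ n * ((z - t) * ((K : ℝ) * f t + σ')) := hsum
        _ = (z - t) * (C * f t + n * σ') := by rw [hC]; ring
        _ ≤ (z - t) * (C * f t + σ / 2) := by
            apply mul_le_mul_of_nonneg_left _ hztpos.le
            linarith
    linarith
  -- apply Gronwall
  have main := le_gronwallBound_of_liminf_deriv_right_le (f := f) (f' := fun t => C * f t)
    (δ := 0) (K := C) (ε := 0) (a := 0) (b := T) hfc hliminf h00
    (fun t _ => by simp)
  intro t ht i
  have hft := main t ht
  rw [sub_zero, gronwallBound_ε0_δ0] at hft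
  have h1 : max (x t i - y t i) 0 ≤ 0 := (hterm_le t i).trans hft
  have h2 : x t i - y t i ≤ 0 := (le_max_left _ _).trans h1
  linarith
end

section
/- Let g : ℝ₊ⁿ → ℝⁿ be a Lipschitz cooperative vector field (nonnegative off-diagonal Jacobian entries a.e.) such that gᵢ(x) ≥ 0 whenever xᵢ = 0, and let φᵗ denote its flow. If g(0) ≥ 0 componentwise, then the trajectory t ↦ φᵗ(0) starting from the origin is componentwise nondecreasing in t, i.e., φˢ(0) ≤ φᵗ(0) whenever 0 ≤ s ≤ t (within the interval of existence). -/
open MeasureTheory Set Filter Topology intervalIntegral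


lemma lipMono {f : ℝ → ℝ} {K : NNReal} (hf : LipschitzWith K f) {a b : ℝ} (hab : a ≤ b)
    (h : ∀ᵐ τ : ℝ, τ ∈ Set.Ioo a b → ∃ D, 0 ≤ D ∧ HasDerivAt f D τ) : f a ≤ f b := by
  have hfc : Continuous f := hf.continuous
  have hInt : ∀ u v : ℝ, IntervalIntegrable f volume u v := fun u v =>
    hfc.intervalIntegrable u v
  set δ : ℕ → ℝ := fun k => ((k : ℝ) + 1)⁻¹ with hδdef
  have hδpos : ∀ k, 0 < δ k := fun k => by positivity
  have hδ0 : Tendsto δ atTop (𝓝 0) := by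
    apply Tendsto.inv_tendsto_atTop
    exact tendsto_atTop_add_const_right atTop 1 tendsto_natCast_atTop_atTop
  -- key pointwise estimate
  have key1 : ∀ k, (∫ τ in a..b, (f (τ + δ k) - f τ) / δ k) ≤ (f b - f a) + 2 * K * δ k := by
    intro k
    set e := δ k with he0
    have he : 0 < e := hδpos k
    have hcomp : (∫ τ in a..b, f (τ + e)) = ∫ τ in a + e..b + e, f τ :=
      intervalIntegral.integral_comp_add_right f e
    have hadj1 : (∫ τ in a..a + e, f τ) + (∫ τ in a + e..b + e, f τ) = ∫ τ in a..b + e, f τ :=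
      intervalIntegral.integral_add_adjacent_intervals (hInt _ _) (hInt _ _)
    have hadj2 : (∫ τ in a..b, f τ) + (∫ τ in b..b + e, f τ) = ∫ τ in a..b + e, f τ :=
      intervalIntegral.integral_add_adjacent_intervals (hInt _ _) (hInt _ _)
    have hsub : (∫ τ in a..b, (f (τ + e) - f τ))
        = (∫ τ in b..b + e, f τ) - ∫ τ in a..a + e, f τ := by
      have hI1 : IntervalIntegrable (fun τ : ℝ => f (τ + e)) volume a b :=
        (hfc.comp (continuous_add_right e)).intervalIntegrable a b
      rw [intervalIntegral.integral_sub hI1 (hInt a b), hcomp]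
      linarith
    have hb2 : |(∫ τ in b..b + e, f τ) - e * f b| ≤ K * e ^ 2 := by
      have hc : (∫ _τ in b..b + e, f b) = e * f b := by
        simp [mul_comm]
      have : (∫ τ in b..b + e, f τ) - e * f b = ∫ τ in b..b + e, (f τ - f b) := by
        rw [intervalIntegral.integral_sub (hInt _ _) (intervalIntegrable_const), hc]
      rw [this]
      have hbd : ∀ x ∈ Set.uIoc b (b + e), ‖f x - f b‖ ≤ (K : ℝ) * e := by
        intro x hx
        rw [Set.uIoc_of_le (by linarith)] at hx
        have : dist (f x) (f b) ≤ K * dist x b := hf.dist_le_mul x b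
        rw [Real.dist_eq, Real.dist_eq] at this
        refine this.trans ?_
        have : |x - b| ≤ e := by
          rw [abs_le]; constructor <;> [linarith [hx.1]; linarith [hx.2]]
        nlinarith [this, K.coe_nonneg]
      have := intervalIntegral.norm_integral_le_of_norm_le_const hbd
      rw [Real.norm_eq_abs] at this
      refine this.trans ?_
      rw [show b + e - b = e by ring, abs_of_pos he]
      nlinarith [K.coe_nonneg]
    have ha2 : |(∫ τ in a..a + e, f τ) - e * f a| ≤ K * e ^ 2 := by
      have hc : (∫ _τ in a..a + e, f a) = e * f a := by
        simp [mul_comm]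
      have : (∫ τ in a..a + e, f τ) - e * f a = ∫ τ in a..a + e, (f τ - f a) := by
        rw [intervalIntegral.integral_sub (hInt _ _) (intervalIntegrable_const), hc]
      rw [this]
      have hbd : ∀ x ∈ Set.uIoc a (a + e), ‖f x - f a‖ ≤ (K : ℝ) * e := by
        intro x hx
        rw [Set.uIoc_of_le (by linarith)] at hx
        have : dist (f x) (f a) ≤ K * dist x a := hf.dist_le_mul x a
        rw [Real.dist_eq, Real.dist_eq] at this
        refine this.trans ?_
        have : |x - a| ≤ e := by
          rw [abs_le]; constructor <;> [linarith [hx.1]; linarith [hx.2]]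
        nlinarith [this, K.coe_nonneg]
      have := intervalIntegral.norm_integral_le_of_norm_le_const hbd
      rw [Real.norm_eq_abs] at this
      refine this.trans ?_
      rw [show a + e - a = e by ring, abs_of_pos he]
      nlinarith [K.coe_nonneg]
    have hdiv : (∫ τ in a..b, (f (τ + e) - f τ) / e)
        = (∫ τ in a..b, (f (τ + e) - f τ)) / e := intervalIntegral.integral_div e _
    rw [hdiv, hsub]
    rw [div_le_iff₀ he]
    have h1 : (∫ τ in b..b + e, f τ) ≤ e * f b + K * e ^ 2 := by
      have := (abs_le.mp hb2).2; linarith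
    have h2 : e * f a - K * e ^ 2 ≤ ∫ τ in a..a + e, f τ := by
      have := (abs_le.mp ha2).1; linarith
    nlinarith [K.coe_nonneg]
  -- dominated convergence
  set μ := volume.restrict (Set.Ioc a b) with hμ
  have hgood : ∀ᵐ τ ∂μ, τ ∈ Set.Ioo a b ∧ ∃ D, 0 ≤ D ∧ HasDerivAt f D τ := by
    have h1 : ∀ᵐ τ ∂μ, τ ∈ Set.Ioc a b := ae_restrict_mem measurableSet_Ioc
    have h2 : ∀ᵐ τ ∂μ, τ ≠ b := by
      refine ae_restrict_of_ae ?_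
      have : volume ({b} : Set ℝ) = 0 := Real.volume_singleton
      exact (ae_iff.2 (by simpa using this))
    have h3 : ∀ᵐ τ ∂μ, τ ∈ Set.Ioo a b → ∃ D, 0 ≤ D ∧ HasDerivAt f D τ := ae_restrict_of_ae h
    filter_upwards [h1, h2, h3] with τ hτ1 hτ2 hτ3
    have hmem : τ ∈ Set.Ioo a b := ⟨hτ1.1, lt_of_le_of_ne hτ1.2 hτ2⟩
    exact ⟨hmem, hτ3 hmem⟩
  have hmeasq : ∀ k, AEStronglyMeasurable (fun τ => (f (τ + δ k) - f τ) / δ k) μ := by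
    intro k
    exact (((hfc.comp (continuous_add_right (δ k))).sub hfc).div_const _).aestronglyMeasurable
  have hbound : ∀ k, ∀ᵐ τ ∂μ, ‖(f (τ + δ k) - f τ) / δ k‖ ≤ (K : ℝ) := by
    intro k
    refine Eventually.of_forall fun τ => ?_
    have hd : dist (f (τ + δ k)) (f τ) ≤ K * dist (τ + δ k) τ := hf.dist_le_mul _ _
    rw [Real.dist_eq, Real.dist_eq] at hd
    have hδk := hδpos k
    rw [Real.norm_eq_abs, abs_div, abs_of_pos hδk, div_le_iff₀ hδk]
    calc |f (τ + δ k) - f τ| ≤ K * |τ + δ k - τ| := hd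
    _ = K * δ k := by rw [show τ + δ k - τ = δ k by ring, abs_of_pos hδk]
  have hlim : ∀ᵐ τ ∂μ, Tendsto (fun k => (f (τ + δ k) - f τ) / δ k) atTop (𝓝 (deriv f τ)) := by
    filter_upwards [hgood] with τ hτ
    obtain ⟨hmem, D, hD0, hD⟩ := hτ
    rw [hD.deriv]
    have hslope := hasDerivAt_iff_tendsto_slope.mp hD
    have htd : Tendsto (fun k => τ + δ k) atTop (𝓝[≠] τ) := by
      apply tendsto_nhdsWithin_of_tendsto_nhds_of_eventually_within
      · simpa using tendsto_const_nhds.add hδ0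
      · exact Eventually.of_forall fun k => by
          simp only [Set.mem_compl_iff, Set.mem_singleton_iff]
          have := hδpos k; intro hc; nlinarith [congrArg (· - τ) hc]
    have := hslope.comp htd
    refine this.congr fun k => ?_
    show slope f τ (τ + δ k) = _
    rw [slope_def_field, add_sub_cancel_left]
  have hDCT := MeasureTheory.tendsto_integral_of_dominated_convergence
    (fun _ => (K : ℝ)) hmeasq (integrable_const _) hbound hlim
  have hLnn : 0 ≤ ∫ τ, deriv f τ ∂μ := by
    refine integral_nonneg_of_ae ?_
    filter_upwards [hgood] with τ hτ
    obtain ⟨_, D, hD0, hD⟩ := hτ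
    rw [hD.deriv]; exact hD0
  have hfinal : Tendsto (fun k => (∫ τ, (f (τ + δ k) - f τ) / δ k ∂μ) - 2 * K * δ k) atTop
      (𝓝 (∫ τ, deriv f τ ∂μ)) := by
    have := hDCT.sub ((hδ0.const_mul (2 * (K : ℝ))))
    simpa using this
  have hle : (∫ τ, deriv f τ ∂μ) ≤ f b - f a := by
    refine le_of_tendsto hfinal (Eventually.of_forall fun k => ?_)
    have := key1 k
    rw [intervalIntegral.integral_of_le hab] at this
    simp only [hμ]
    linarith
  linarith

set_option maxHeartbeats 1000000 in
lemma quasiMono {n : ℕ} {K : NNReal} {P : Set (Fin n → ℝ)} (hP : P = {x | ∀ i, 0 ≤ x i})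
    {g : (Fin n → ℝ) → (Fin n → ℝ)} (hg : LipschitzOnWith K g P)
    (hae : ∀ᵐ x ∂(volume.restrict P),
      DifferentiableAt ℝ g x ∧
      ∀ i j, i ≠ j → 0 ≤ fderiv ℝ g x (Pi.single j 1) i) :
    ∀ x ∈ P, ∀ y ∈ P, (∀ j, x j ≤ y j) → ∀ i, x i = y i → g x i ≤ g y i := by
  subst hP
  intro x hx y hy hxy i hxyi
  have hPmeas : MeasurableSet {x : Fin n → ℝ | ∀ i, 0 ≤ x i} := by
    have : {x : Fin n → ℝ | ∀ i, 0 ≤ x i} = Set.pi Set.univ (fun _ => Set.Ici (0:ℝ)) := by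
      ext z; simp [Set.mem_pi, Pi.le_def]
    rw [this]
    exact MeasurableSet.univ_pi fun _ => measurableSet_Ici
  -- the bad set
  have hae' : ∀ᵐ z ∂(volume : Measure (Fin n → ℝ)), z ∈ {x : Fin n → ℝ | ∀ i, 0 ≤ x i} →
      (DifferentiableAt ℝ g z ∧ ∀ i j, i ≠ j → 0 ≤ fderiv ℝ g z (Pi.single j 1) i) :=
    (ae_restrict_iff' hPmeas).mp hae
  set Bad : Set (Fin n → ℝ) := {z | ¬ (z ∈ {x : Fin n → ℝ | ∀ i, 0 ≤ x i} →
      (DifferentiableAt ℝ g z ∧ ∀ i j, i ≠ j → 0 ≤ fderiv ℝ g z (Pi.single j 1) i))} with hBad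
  have hBadnull : volume Bad = 0 := hae'
  set N : Set (Fin n → ℝ) := toMeasurable volume Bad with hN
  have hNmeas : MeasurableSet N := measurableSet_toMeasurable _ _
  have hNnull : volume N = 0 := by rw [hN, measure_toMeasurable]; exact hBadnull
  have hNprop : ∀ z, z ∉ N → (∀ j, (0:ℝ) ≤ z j) →
      (DifferentiableAt ℝ g z ∧ ∀ i j, i ≠ j → 0 ≤ fderiv ℝ g z (Pi.single j 1) i) := by
    intro z hz hzP
    by_contra hc
    apply hz
    apply subset_toMeasurable volume Bad
    show z ∈ Bad
    simp only [hBad, Set.mem_setOf_eq]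
    exact fun h => hc (h hzP)
  set d : Fin n → ℝ := fun j => y j - x j with hd
  have hd0 : ∀ j, 0 ≤ d j := fun j => sub_nonneg.mpr (hxy j)
  have hdi : d i = 0 := by simp [hd, hxyi]
  -- Fubini: almost every translate line avoids N
  have hfub : ∀ᵐ z ∂(volume : Measure (Fin n → ℝ)),
      ∀ᵐ τ ∂(volume : Measure ℝ), z + τ • d ∉ N := by
    have hmeasset : MeasurableSet {q : ℝ × (Fin n → ℝ) | q.2 + q.1 • d ∈ N} := by
      have hcont : Continuous fun q : ℝ × (Fin n → ℝ) => q.2 + q.1 • d :=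
        continuous_snd.add (continuous_fst.smul continuous_const)
      exact hcont.measurable hNmeas
    have := (Measure.ae_ae_comm (μ := (volume : Measure ℝ))
      (ν := (volume : Measure (Fin n → ℝ)))
      (p := fun τ z => z + τ • d ∈ N) hmeasset)
    -- show ∀ᵐ τ, ∀ᵐ z, z + τ•d ∈ N is false... we need the complement version
    have hL : ∀ᵐ τ ∂(volume : Measure ℝ), ∀ᵐ z ∂(volume : Measure (Fin n → ℝ)),
        z + τ • d ∉ N := by
      refine Eventually.of_forall fun τ => ?_
      have : volume ((fun z : Fin n → ℝ => z + τ • d) ⁻¹' N) = volume N :=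
        measure_preimage_add_right volume (τ • d) N
      rw [ae_iff]
      have hset : {a : Fin n → ℝ | ¬ a + τ • d ∉ N} = (fun z : Fin n → ℝ => z + τ • d) ⁻¹' N := by
        ext a; simp [Set.preimage]
      rw [hset]
      exact this.trans hNnull
    -- flip using ae_ae_comm on the complement predicate
    have hmeasset' : MeasurableSet {q : ℝ × (Fin n → ℝ) | q.2 + q.1 • d ∉ N} :=
      hmeasset.compl
    exact (Measure.ae_ae_comm (p := fun τ z => z + τ • d ∉ N) hmeasset').mp hL
  -- find good z in a small box above x
  have hkey : ∀ δ : ℝ, 0 < δ → g x i ≤ g y i + 2 * K * δ := by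
    intro δ hδ
    obtain ⟨z, hzbox, hzgood⟩ : ∃ z, z ∈ Set.Icc x (fun j => x j + δ) ∧
        ∀ᵐ τ ∂(volume : Measure ℝ), z + τ • d ∉ N := by
      by_contra hc
      push_neg at hc
      have hsub : Set.Icc x (fun j => x j + δ) ⊆
          {z | ¬ ∀ᵐ τ ∂(volume : Measure ℝ), z + τ • d ∉ N} := by
        intro z hz; exact hc z hz
      have h1 : volume {z | ¬ ∀ᵐ τ ∂(volume : Measure ℝ), z + τ • d ∉ N} = 0 := hfub
      have h2 : volume (Set.Icc x (fun j => x j + δ)) = 0 :=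
        measure_mono_null hsub h1
      rw [Real.volume_Icc_pi] at h2
      have : ∀ j : Fin n, ENNReal.ofReal ((fun j => x j + δ) j - x j) ≠ 0 := by
        intro j
        simp only [add_sub_cancel_left]
        simp [ENNReal.ofReal_eq_zero, not_le, hδ]
      exact absurd h2 (Finset.prod_ne_zero_iff.mpr fun j _ => this j)
    have hzP : ∀ j, (0:ℝ) ≤ z j := fun j => le_trans (hx j) (hzbox.1 j)
    -- the path τ ↦ z + τ • d
    set c : ℝ → (Fin n → ℝ) := fun τ => z + τ • d with hc
    have hcP : ∀ τ : ℝ, 0 ≤ τ → c τ ∈ {x : Fin n → ℝ | ∀ i, 0 ≤ x i} := by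
      intro τ hτ j
      simp only [hc, Pi.add_apply, Pi.smul_apply, smul_eq_mul]
      have := mul_nonneg hτ (hd0 j)
      linarith [hzP j]
    -- h is Lipschitz on Icc 0 1
    have hclip : LipschitzWith ‖d‖₊ c := by
      apply LipschitzWith.of_dist_le_mul
      intro τ σ
      simp only [hc, dist_eq_norm]
      have : (z + τ • d) - (z + σ • d) = (τ - σ) • d := by
        ext j; simp [smul_eq_mul]; ring
      rw [this, norm_smul]
      simp [Real.norm_eq_abs, mul_comm]
    -- Lipschitz of τ ↦ g (c τ) i on Icc 0 1
    have hmaps : Set.MapsTo c (Set.Icc (0:ℝ) 1) {x : Fin n → ℝ | ∀ i, 0 ≤ x i} :=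
      fun τ hτ => hcP τ hτ.1
    have hgc : LipschitzOnWith (K * ‖d‖₊) (g ∘ c) (Set.Icc (0:ℝ) 1) :=
      hg.comp hclip.lipschitzOnWith hmaps
    have hproj : LipschitzWith 1 (fun v : Fin n → ℝ => v i) := by
      apply LipschitzWith.of_dist_le_mul
      intro u v
      rw [NNReal.coe_one, one_mul]
      exact dist_le_pi_dist u v i
    have hgci : LipschitzOnWith (1 * (K * ‖d‖₊)) ((fun v : Fin n → ℝ => v i) ∘ (g ∘ c))
        (Set.Icc (0:ℝ) 1) := hproj.comp_lipschitzOnWith hgc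
    obtain ⟨F, hFlip, hFeq⟩ := hgci.extend_real
    have hder : ∀ᵐ τ : ℝ, τ ∈ Set.Ioo (0:ℝ) 1 → ∃ D, 0 ≤ D ∧ HasDerivAt F D τ := by
      filter_upwards [hzgood] with τ hτN hτmem
      have hcτP : ∀ j, 0 ≤ c τ j := hcP τ hτmem.1.le
      obtain ⟨hdiff, hoff⟩ := hNprop _ hτN hcτP
      have hcd : HasDerivAt c d τ := by
        have h1 : HasDerivAt (fun τ : ℝ => τ • d) ((1:ℝ) • d) τ :=
          (hasDerivAt_id τ).smul_const d
        rw [one_smul] at h1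
        exact h1.const_add z
      have hgd : HasDerivAt (fun τ => g (c τ)) (fderiv ℝ g (c τ) d) τ :=
        (hdiff.hasFDerivAt).comp_hasDerivAt τ hcd
      have hgdi : HasDerivAt (fun τ => g (c τ) i) (fderiv ℝ g (c τ) d i) τ :=
        (hasDerivAt_pi.mp hgd) i
      refine ⟨fderiv ℝ g (c τ) d i, ?_, ?_⟩
      · have hdsum : d = ∑ j, d j • (Pi.single j 1 : Fin n → ℝ) := by
          have h1 : ∀ j, d j • (Pi.single j 1 : Fin n → ℝ) = Pi.single j (d j) := by
            intro j; ext k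
            simp [Pi.single_apply, mul_ite]
          simp only [h1]
          exact (Finset.univ_sum_single d).symm
        have hmap : fderiv ℝ g (c τ) d
            = ∑ j, d j • fderiv ℝ g (c τ) ((Pi.single j 1 : Fin n → ℝ)) := by
          conv_lhs => rw [hdsum]
          rw [map_sum]
          exact Finset.sum_congr rfl fun j _ => (fderiv ℝ g (c τ)).map_smul _ _
        rw [hmap, Finset.sum_apply]
        apply Finset.sum_nonneg
        intro j _
        simp only [Pi.smul_apply, smul_eq_mul]
        rcases eq_or_ne j i with rfl | hji
        · rw [hdi, zero_mul]
        · exact mul_nonneg (hd0 j) (hoff i j (Ne.symm hji))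
      · apply hgdi.congr_of_eventuallyEq
        have hmem : Set.Icc (0:ℝ) 1 ∈ nhds τ := Icc_mem_nhds hτmem.1 hτmem.2
        filter_upwards [hmem] with σ hσ
        exact (hFeq hσ).symm
    have h01 : F 0 ≤ F 1 := lipMono hFlip zero_le_one hder
    have hF0 : F 0 = g z i := by
      have := hFeq (Set.left_mem_Icc.mpr zero_le_one)
      simp only [Function.comp_apply] at this
      rw [← this]
      congr 1
      simp [hc]
    have hF1 : F 1 = g (z + d) i := by
      have := hFeq (Set.right_mem_Icc.mpr zero_le_one)
      simp only [Function.comp_apply] at this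
      rw [← this]
      congr 1
      simp [hc]
    have hgz : g z i ≤ g (z + d) i := by rw [← hF0, ← hF1]; exact h01
    -- Lipschitz transfer back to x and y
    have hzP' : z ∈ {x : Fin n → ℝ | ∀ i, 0 ≤ x i} := hzP
    have hzdP : z + d ∈ {x : Fin n → ℝ | ∀ i, 0 ≤ x i} := by
      intro j
      have := hd0 j
      have := hzP j
      simp only [Pi.add_apply]
      linarith
    have hdxz : dist x z ≤ δ := by
      rw [dist_pi_le_iff hδ.le]
      intro j
      rw [Real.dist_eq, abs_le]
      have h1 : x j ≤ z j := hzbox.1 j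
      have h2 : z j ≤ x j + δ := by simpa using hzbox.2 j
      constructor <;> [linarith; linarith]
    have hdzy : dist (z + d) y ≤ δ := by
      rw [dist_pi_le_iff hδ.le]
      intro j
      rw [Real.dist_eq, abs_le]
      have h1 : x j ≤ z j := hzbox.1 j
      have h2 : z j ≤ x j + δ := by simpa using hzbox.2 j
      simp only [Pi.add_apply, hd]
      constructor <;> [linarith; linarith]
    have hb1 : dist (g x i) (g z i) ≤ K * δ := by
      refine le_trans (dist_le_pi_dist (g x) (g z) i) ?_
      refine le_trans (hg.dist_le_mul x hx z hzP') ?_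
      exact mul_le_mul_of_nonneg_left hdxz K.coe_nonneg
    have hb2 : dist (g (z + d) i) (g y i) ≤ K * δ := by
      refine le_trans (dist_le_pi_dist (g (z + d)) (g y) i) ?_
      refine le_trans (hg.dist_le_mul (z + d) hzdP y hy) ?_
      exact mul_le_mul_of_nonneg_left hdzy K.coe_nonneg
    rw [Real.dist_eq, abs_le] at hb1 hb2
    linarith [hb1.1, hb1.2, hb2.1, hb2.2, hgz]
  -- conclude
  by_contra hlt
  push_neg at hlt
  set ε := g x i - g y i with hε
  have hεpos : 0 < ε := by simp only [hε]; linarith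
  have hδpos : 0 < ε / (2 * K + 1) := by positivity
  have h2 := hkey _ hδpos
  have : 2 * (K:ℝ) * (ε / (2 * K + 1)) < ε := by
    rw [mul_div_assoc']
    rw [div_lt_iff₀ (by positivity)]
    nlinarith [K.coe_nonneg]
  simp only [hε] at this h2
  linarith


set_option maxHeartbeats 1000000 in
/-- For a cooperative vector field leaving the nonnegative orthant invariant
with g(0) ≥ 0, the trajectory from the origin is componentwise nondecreasing. -/
theorem stmt_5 (n : ℕ) (K : NNReal)
    (P : Set (Fin n → ℝ)) (hP : P = {x | ∀ i, 0 ≤ x i})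
    (g : (Fin n → ℝ) → (Fin n → ℝ)) (hg : LipschitzOnWith K g P)
    (hae : ∀ᵐ x ∂(volume.restrict P),
      DifferentiableAt ℝ g x ∧
      ∀ i j, i ≠ j → 0 ≤ fderiv ℝ g x (Pi.single j 1) i)
    (hinv : ∀ x ∈ P, ∀ i, x i = 0 → 0 ≤ g x i)
    (φ : ℝ → (Fin n → ℝ) → (Fin n → ℝ))
    (hφ0 : ∀ x ∈ P, φ 0 x = x)
    (hφ : ∀ x ∈ P, ∀ t ≥ (0 : ℝ), φ t x ∈ P ∧ HasDerivAt (fun s => φ s x) (g (φ t x)) t)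
    (hsemi : ∀ x ∈ P, ∀ s ≥ (0 : ℝ), ∀ t ≥ (0 : ℝ), φ (t + s) x = φ t (φ s x))
    (hg0 : ∀ i, 0 ≤ g 0 i) :
    ∀ s t : ℝ, 0 ≤ s → s ≤ t → ∀ i, φ s 0 i ≤ φ t 0 i := by
  have hQM := quasiMono hP hg hae
  have h0P : (0 : Fin n → ℝ) ∈ P := by rw [hP]; intro i; exact le_refl 0
  set X : ℝ → (Fin n → ℝ) := fun t => φ t 0 with hX
  have hXP : ∀ t, 0 ≤ t → X t ∈ P := fun t ht => (hφ 0 h0P t ht).1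
  have hX' : ∀ t, 0 ≤ t → HasDerivAt X (g (X t)) t := fun t ht => (hφ 0 h0P t ht).2
  have hXnn : ∀ t, 0 ≤ t → ∀ i, 0 ≤ X t i := by
    intro t ht i
    have := hXP t ht
    rw [hP] at this
    exact this i
  -- main claim
  have main : ∀ c : ℝ, 0 ≤ c → ∀ t, 0 ≤ t → ∀ i, 0 ≤ X (t + c) i - X t i := by
    intro c hc
    set w : ℝ → Fin n → ℝ := fun t j => X (t + c) j - X t j with hw
    have hw' : ∀ t, 0 ≤ t → ∀ i, HasDerivAt (fun t => w t i)
        (g (X (t + c)) i - g (X t) i) t := by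
      intro t ht i
      have h1 : HasDerivAt (fun t : ℝ => X (t + c)) (g (X (t + c))) t := by
        have hshift : HasDerivAt (fun t : ℝ => t + c) 1 t := (hasDerivAt_id t).add_const c
        have := (hX' (t + c) (by linarith)).scomp t hshift
        simpa [Function.comp_def] using this
      have h2 := hX' t ht
      have h1i := (hasDerivAt_pi.mp h1) i
      have h2i := (hasDerivAt_pi.mp h2) i
      exact h1i.sub h2i
    have hw0 : ∀ i, 0 ≤ w 0 i := by
      intro i
      have h1 : X (0 + c) i = φ c 0 i := by rw [zero_add]
      have h2 : X 0 i = 0 := by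
        show φ 0 0 i = 0
        rw [hφ0 0 h0P]
        rfl
      simp only [hw, h1, h2, sub_zero]
      exact hXnn c hc i
    -- the epsilon claim
    have claim : ∀ ε : ℝ, 0 < ε → ∀ t, 0 ≤ t → ∀ i,
        0 < w t i + ε * Real.exp (((K : ℝ) + 1) * t) := by
      intro ε hε
      by_contra hcon
      push_neg at hcon
      obtain ⟨t₁, ht₁0, i₁, hi₁⟩ := hcon
      set v : ℝ → Fin n → ℝ := fun t j => w t j + ε * Real.exp (((K : ℝ) + 1) * t) with hv
      set S : Set ℝ := {t | 0 ≤ t ∧ ∃ i, v t i ≤ 0} with hS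
      have hSne : S.Nonempty := ⟨t₁, ht₁0, i₁, hi₁⟩
      have hSbd : BddBelow S := ⟨0, fun t ht => ht.1⟩
      set t₀ : ℝ := sInf S with ht₀
      have ht₀0 : 0 ≤ t₀ := le_csInf hSne fun t ht => ht.1
      have hvc : ∀ t, 0 ≤ t → ∀ i, ContinuousAt (fun t => v t i) t := by
        intro t ht i
        have h1 := (hw' t ht i).continuousAt
        exact h1.add ((Real.continuous_exp.comp (continuous_const.mul continuous_id)).continuousAt.const_mul ε)
      -- t₀ ∈ S
      have ht₀S : ∃ i, v t₀ i ≤ 0 := by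
        by_contra hc
        push_neg at hc
        have hev : ∀ᶠ t in nhds t₀, ∀ i, 0 < v t i := by
          rw [eventually_all]
          intro i
          exact (hvc t₀ ht₀0 i).eventually (eventually_gt_nhds (hc i))
        obtain ⟨η, hη, hball⟩ := Metric.eventually_nhds_iff.mp hev
        obtain ⟨s₂, hs₂S, hs₂lt⟩ := (csInf_lt_iff hSbd hSne).mp
          (show sInf S < t₀ + η by rw [← ht₀]; linarith)
        have hs₂ge : t₀ ≤ s₂ := csInf_le hSbd hs₂S
        have : dist s₂ t₀ < η := by
          rw [Real.dist_eq, abs_lt]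
          constructor <;> [linarith; linarith]
        obtain ⟨i, hi⟩ := hs₂S.2
        exact absurd (hball this i) (not_lt.mpr hi)
      have ht₀pos : 0 < t₀ := by
        rcases eq_or_lt_of_le ht₀0 with h | h
        · exfalso
          obtain ⟨i, hi⟩ := ht₀S
          have : v 0 i = w 0 i + ε := by
            simp [hv]
          rw [← h] at hi
          rw [this] at hi
          have := hw0 i
          linarith
        · exact h
      have hpos : ∀ t, 0 ≤ t → t < t₀ → ∀ i, 0 < v t i := by
        intro t ht htlt i
        by_contra hc
        push_neg at hc
        have : t₀ ≤ t := csInf_le hSbd ⟨ht, i, hc⟩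
        linarith
      -- all components are ≥ 0 at t₀ (left limit)
      have hv0 : ∀ j, 0 ≤ v t₀ j := by
        intro j
        have hcj : ContinuousAt (fun t => v t j) t₀ := hvc t₀ ht₀0 j
        have htend : Tendsto (fun t => v t j) (nhdsWithin t₀ (Set.Iio t₀)) (nhds (v t₀ j)) :=
          hcj.continuousWithinAt
        refine ge_of_tendsto htend ?_
        filter_upwards [Ioo_mem_nhdsLT ht₀pos] with t htm
        exact (hpos t htm.1.le htm.2 j).le
      obtain ⟨i, hi⟩ := ht₀S
      have hvi0 : v t₀ i = 0 := le_antisymm hi (hv0 i)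
      set E : ℝ := ε * Real.exp (((K : ℝ) + 1) * t₀) with hE
      have hEpos : 0 < E := by positivity
      have hwi : w t₀ i = -E := by
        have : v t₀ i = w t₀ i + E := rfl
        rw [this] at hvi0
        linarith
      have hwj : ∀ j, -E ≤ w t₀ j := by
        intro j
        have h1 := hv0 j
        have : v t₀ j = w t₀ j + E := rfl
        rw [this] at h1
        linarith
      -- comparison vector z
      set Y : Fin n → ℝ := X (t₀ + c) with hYdef
      set Z : Fin n → ℝ := X t₀ with hZdef
      set z : Fin n → ℝ := fun j => if j = i then Y i else min (Y j) (Z j) with hz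
      have hYP : Y ∈ P := hXP _ (by linarith)
      have hZP : Z ∈ P := hXP _ ht₀0
      have hYnn : ∀ j, 0 ≤ Y j := by rw [hP] at hYP; exact hYP
      have hZnn : ∀ j, 0 ≤ Z j := by rw [hP] at hZP; exact hZP
      have hzP : z ∈ P := by
        rw [hP]
        intro j
        simp only [hz]
        split
        · exact hYnn i
        · exact le_min (hYnn j) (hZnn j)
      have hzle : ∀ j, z j ≤ Y j := by
        intro j
        simp only [hz]
        split
        · next h => rw [h]
        · exact min_le_left _ _
      have hzi : z i = Y i := by simp [hz]
      have hQMzi : g z i ≤ g Y i := hQM z hzP Y hYP hzle i hzi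
      -- Lipschitz bound between z and Z
      have hdzZ : dist z Z ≤ E := by
        rw [dist_pi_le_iff hEpos.le]
        intro j
        rw [Real.dist_eq, abs_le]
        simp only [hz]
        split
        · next h =>
          subst h
          have : Y j - Z j = w t₀ j := rfl
          constructor <;> [linarith [hwj j, sub_le_iff_le_add.mp (le_of_eq this)]; skip]
          · rw [show Y j - Z j = w t₀ j from rfl, hwi]
            linarith
        · have h1 : min (Y j) (Z j) ≤ Z j := min_le_right _ _
          have h2 : -E ≤ w t₀ j := hwj j
          have h3 : Y j - Z j = w t₀ j := rfl
          constructor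
          · rcases le_total (Y j) (Z j) with h | h
            · rw [min_eq_left h]; linarith
            · rw [min_eq_right h]; linarith
          · linarith
      have hlipzZ : dist (g z i) (g Z i) ≤ K * E := by
        refine le_trans (dist_le_pi_dist (g z) (g Z) i) ?_
        refine le_trans (hg.dist_le_mul z hzP Z hZP) ?_
        exact mul_le_mul_of_nonneg_left hdzZ K.coe_nonneg
      have hDbound : -((K : ℝ) * E) ≤ g Y i - g Z i := by
        rw [Real.dist_eq, abs_le] at hlipzZ
        linarith [hlipzZ.1, hlipzZ.2, hQMzi]
      -- derivative of v at t₀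
      have hveq : HasDerivAt (fun t => v t i)
          (g (X (t₀ + c)) i - g (X t₀) i + ε * ((((K : ℝ) + 1)) * Real.exp (((K : ℝ) + 1) * t₀))) t₀ := by
        have h1 := hw' t₀ ht₀0 i
        have h2 : HasDerivAt (fun t : ℝ => ε * Real.exp (((K : ℝ) + 1) * t))
            (ε * ((((K : ℝ) + 1)) * Real.exp (((K : ℝ) + 1) * t₀))) t₀ := by
          have hin : HasDerivAt (fun t : ℝ => ((K : ℝ) + 1) * t) ((K : ℝ) + 1) t₀ := by
            simpa using (hasDerivAt_id t₀).const_mul ((K : ℝ) + 1)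
          have hexp := (Real.hasDerivAt_exp (((K : ℝ) + 1) * t₀)).comp t₀ hin
          have := hexp.const_mul ε
          rw [show ε * ((((K : ℝ) + 1)) * Real.exp (((K : ℝ) + 1) * t₀))
              = ε * (Real.exp (((K : ℝ) + 1) * t₀) * ((K : ℝ) + 1)) by ring]
          exact this
        exact h1.add h2
      set D : ℝ := g (X (t₀ + c)) i - g (X t₀) i
          + ε * ((((K : ℝ) + 1)) * Real.exp (((K : ℝ) + 1) * t₀)) with hD
      have hDpos : 0 < D := by
        have h1 : g (X (t₀ + c)) i - g (X t₀) i = g Y i - g Z i := rfl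
        rw [hD, h1]
        have : ε * ((((K : ℝ) + 1)) * Real.exp (((K : ℝ) + 1) * t₀)) = ((K : ℝ) + 1) * E := by
          rw [hE]; ring
        rw [this]
        nlinarith [hDbound, hEpos]
      -- but slope from the left is ≤ 0
      have hslope := hasDerivAt_iff_tendsto_slope.mp hveq
      have hslope' : Tendsto (slope (fun t => v t i) t₀) (nhdsWithin t₀ (Set.Iio t₀)) (nhds D) :=
        hslope.mono_left (nhdsWithin_mono _ fun x hx => ne_of_lt hx)
      have hDnonpos : D ≤ 0 := by
        refine le_of_tendsto hslope' ?_
        filter_upwards [Ioo_mem_nhdsLT ht₀pos] with t htm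
        rw [slope_def_field, hvi0, sub_zero]
        have hnum : 0 < v t i := hpos t htm.1.le htm.2 i
        rw [div_nonpos_iff]
        exact Or.inl ⟨hnum.le, by linarith [htm.2]⟩
      linarith
    -- let ε → 0
    intro t ht i
    by_contra hc
    push_neg at hc
    have hcw : w t i < 0 := hc
    have hexppos : 0 < Real.exp (((K : ℝ) + 1) * t) := Real.exp_pos _
    set ε₀ : ℝ := (- w t i) / (2 * Real.exp (((K : ℝ) + 1) * t)) with hε₀
    have hε₀pos : 0 < ε₀ := by
      apply div_pos
      · linarith [hcw]
      · positivity
    have hcl := claim ε₀ hε₀pos t ht i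
    have heq2 : ε₀ * Real.exp (((K : ℝ) + 1) * t) = (- w t i) / 2 := by
      rw [hε₀]
      field_simp
    rw [heq2] at hcl
    linarith
  -- conclude
  intro s t hs hst i
  have := main (t - s) (by linarith) s hs i
  have heq : s + (t - s) = t := by ring
  rw [heq] at this
  simp only [hX] at this
  linarith
end

section
/- Let g : ℝⁿ → ℝⁿ be a Lipschitz cooperative vector field whose flow preserves the componentwise order, and suppose the trajectory x(t) = φᵗ(x₀) is bounded and its forward orbit closure is contained in the domain. If ‖φᵗ(x) − φᵗ(y)‖₁ is nonincreasing in t for all x, y, and strictly decreasing unless φᵗ(x) = φᵗ(y), and x* is an equilibrium of g, then every bounded solution converges to x*: lim_{t→∞} φᵗ(x₀) = x* for every initial condition x₀ whose trajectory is bounded with compact closure in the domain. -/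
open Filter Topology

/-- Under a strict l1-contraction property of an order-preserving flow, every
bounded solution converges to the equilibrium. -/
theorem stmt_6 (n : ℕ) (K : NNReal)
    (g : (Fin n → ℝ) → (Fin n → ℝ)) (hg : LipschitzWith K g)
    (φ : ℝ → (Fin n → ℝ) → (Fin n → ℝ))
    (hφ0 : ∀ x, φ 0 x = x)
    (hφ : ∀ x, ∀ t ≥ (0 : ℝ), HasDerivAt (fun s => φ s x) (g (φ t x)) t)
    (hsemi : ∀ x, ∀ s ≥ (0 : ℝ), ∀ t ≥ (0 : ℝ), φ (t + s) x = φ t (φ s x))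
    (hord : ∀ x y, (∀ i, x i ≤ y i) → ∀ t ≥ (0 : ℝ), ∀ i, φ t x i ≤ φ t y i)
    (hmon : ∀ x y, AntitoneOn (fun t => ∑ i, |φ t x i - φ t y i|) (Set.Ici 0))
    (hstrict : ∀ x y, ∀ s t : ℝ, 0 ≤ s → s < t → φ s x ≠ φ s y →
      ∑ i, |φ t x i - φ t y i| < ∑ i, |φ s x i - φ s y i|)
    (xstar : Fin n → ℝ) (hxstar : g xstar = 0)
    (hfix : ∀ t ≥ (0 : ℝ), φ t xstar = xstar) :
    ∀ x₀ : Fin n → ℝ, Bornology.IsBounded ((fun t => φ t x₀) '' Set.Ici (0 : ℝ)) →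
      Filter.Tendsto (fun t => φ t x₀) Filter.atTop (nhds xstar) := by
  intro x₀ hbdd
  -- contraction property
  have hcontr : ∀ x y, ∀ t ≥ (0:ℝ), ∑ i, |φ t x i - φ t y i| ≤ ∑ i, |x i - y i| := by
    intro x y t ht
    have := hmon x y (Set.mem_Ici.2 le_rfl) (Set.mem_Ici.2 ht) ht
    simpa [hφ0] using this
  set W : ℝ → ℝ := fun t => ∑ i, |φ (max t 0) x₀ i - φ (max t 0) xstar i| with hWdef
  have hWanti : Antitone W := by
    intro s t hst
    exact hmon x₀ xstar (Set.mem_Ici.2 (le_max_right _ _))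
      (Set.mem_Ici.2 (le_max_right _ _)) (max_le_max hst le_rfl)
  have hWnonneg : ∀ t, 0 ≤ W t := fun t => Finset.sum_nonneg fun i _ => abs_nonneg _
  have hWbdd : BddBelow (Set.range W) := ⟨0, by rintro y ⟨t, rfl⟩; exact hWnonneg t⟩
  have hWtend : Tendsto W atTop (𝓝 (⨅ t, W t)) := tendsto_atTop_ciInf hWanti hWbdd
  set L := ⨅ t, W t with hLdef
  have hLle : ∀ t, L ≤ W t := fun t => ciInf_le hWbdd t
  -- W t equals the distance to xstar for t ≥ 0
  have hWeq : ∀ t ≥ (0:ℝ), W t = ∑ i, |φ t x₀ i - xstar i| := by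
    intro t ht
    simp only [hWdef, max_eq_left ht, hfix t ht]
  -- compact closure
  have hcomp : IsCompact (closure ((fun t => φ t x₀) '' Set.Ici (0:ℝ))) :=
    hbdd.isCompact_closure
  have hmem : ∀ k : ℕ, φ (k:ℝ) x₀ ∈ closure ((fun t => φ t x₀) '' Set.Ici (0:ℝ)) := by
    intro k
    exact subset_closure ⟨(k:ℝ), Set.mem_Ici.2 (Nat.cast_nonneg k), rfl⟩
  obtain ⟨z, hz, ψ, hψmono, hψtend⟩ := hcomp.tendsto_subseq hmem
  have htk : Tendsto (fun k : ℕ => ((ψ k : ℕ) : ℝ)) atTop atTop :=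
    tendsto_natCast_atTop_atTop.comp hψmono.tendsto_atTop
  -- F computes l1 distance to xstar, continuous
  have hFcont : Continuous (fun y : Fin n → ℝ => ∑ i, |y i - xstar i|) :=
    continuous_finset_sum _ fun i _ => ((continuous_apply i).sub continuous_const).abs
  have hWψ : Tendsto (fun k => W ((ψ k : ℕ) : ℝ)) atTop (𝓝 L) := hWtend.comp htk
  have hWψ' : Tendsto (fun k => W ((ψ k : ℕ) : ℝ)) atTop (𝓝 (∑ i, |z i - xstar i|)) := by
    have : Tendsto (fun k => ∑ i, |φ ((ψ k : ℕ) : ℝ) x₀ i - xstar i|) atTop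
        (𝓝 (∑ i, |z i - xstar i|)) := (hFcont.tendsto z).comp hψtend
    refine this.congr fun k => ?_
    rw [hWeq _ (Nat.cast_nonneg _)]
  have hLz : L = ∑ i, |z i - xstar i| := tendsto_nhds_unique hWψ hWψ'
  -- show z = xstar
  have hzstar : z = xstar := by
    by_contra hne
    have h01 := hstrict z xstar 0 1 le_rfl one_pos (by simpa [hφ0] using hne)
    rw [hφ0, hfix 1 zero_le_one] at h01
    rw [hφ0] at h01
    -- h01 : ∑ i, |φ 1 z i - xstar i| < ∑ i, |z i - xstar i|
    -- φ (1 + ψ k) x₀ → φ 1 z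
    have hu1 : Tendsto (fun k => ∑ j, |φ ((ψ k : ℕ) : ℝ) x₀ j - z j|) atTop (𝓝 0) := by
      have hcont : Continuous (fun y : Fin n → ℝ => ∑ j, |y j - z j|) :=
        continuous_finset_sum _ fun j _ => ((continuous_apply j).sub continuous_const).abs
      have := (hcont.tendsto z).comp hψtend
      simpa [Function.comp_def] using this
    have hu2 : Tendsto (fun k => φ 1 (φ ((ψ k : ℕ) : ℝ) x₀)) atTop (𝓝 (φ 1 z)) := by
      rw [tendsto_pi_nhds]
      intro i
      rw [tendsto_iff_dist_tendsto_zero]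
      refine squeeze_zero (fun k => dist_nonneg) (fun k => ?_) hu1
      have hle := hcontr (φ ((ψ k : ℕ) : ℝ) x₀) z 1 zero_le_one
      calc dist (φ 1 (φ ((ψ k : ℕ) : ℝ) x₀) i) (φ 1 z i)
          = |φ 1 (φ ((ψ k : ℕ) : ℝ) x₀) i - φ 1 z i| := Real.dist_eq _ _
        _ ≤ ∑ j, |φ 1 (φ ((ψ k : ℕ) : ℝ) x₀) j - φ 1 z j| :=
            Finset.single_le_sum (f := fun j => |φ 1 (φ ((ψ k : ℕ) : ℝ) x₀) j - φ 1 z j|)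
              (fun j _ => abs_nonneg _) (Finset.mem_univ i)
        _ ≤ ∑ j, |φ ((ψ k : ℕ) : ℝ) x₀ j - z j| := hle
    have hu3 : Tendsto (fun k => W (1 + ((ψ k : ℕ) : ℝ))) atTop
        (𝓝 (∑ i, |φ 1 z i - xstar i|)) := by
      have h4 := (hFcont.tendsto (φ 1 z)).comp hu2
      refine h4.congr fun k => ?_
      have hge : (0:ℝ) ≤ 1 + ((ψ k : ℕ) : ℝ) := by positivity
      simp only [Function.comp]
      rw [hWeq _ hge, hsemi x₀ _ (Nat.cast_nonneg _) 1 zero_le_one]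
    have hgeL : (∑ i, |φ 1 z i - xstar i|) ≥ L :=
      ge_of_tendsto hu3 (Filter.Eventually.of_forall fun k => hLle _)
    rw [hLz] at hgeL
    exact absurd h01 (not_lt.2 hgeL)
  -- hence L = 0 and W → 0
  have hL0 : L = 0 := by rw [hLz, hzstar]; simp
  rw [hL0] at hWtend
  -- conclude convergence
  rw [tendsto_pi_nhds]
  intro i
  rw [tendsto_iff_dist_tendsto_zero]
  refine squeeze_zero' (Filter.Eventually.of_forall fun t => dist_nonneg) ?_ hWtend
  filter_upwards [Filter.eventually_ge_atTop (0:ℝ)] with t ht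
  rw [hWeq t ht, Real.dist_eq]
  exact Finset.single_le_sum (f := fun j => |φ t x₀ j - xstar j|)
    (fun j _ => abs_nonneg _) (Finset.mem_univ i)
end

section
/- Consider a dynamical flow network ρ̇_e = f^in_e(ρ) − f^out_e(ρ) on a finite directed graph with edge set E, cut structure as below, finite buffer capacities B_e < ∞, and a routing policy whose total outflow across any cut boundary satisfies ∑_{e ∈ ∂⁺_U} f^out_e(ρ) ≤ C_U and whose inflow into E⁺_U satisfies ∑_{e ∈ E⁺_U}(f^in_e(ρ) − f^out_e(ρ)) ≥ λ_U − C_U for all ρ in the domain. If λ_U > C_U for some cut U, then for every initial condition ρ° the first exit time κ(ρ°) from the open region ∏_e [0, B_e) satisfies κ(ρ°) ≤ (∑_{e ∈ E⁺_U}(B_e − ρ°_e)) / (λ_U − C_U). -/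
/-- Finite-buffer overload: if a cut constraint is violated, the exit time from
the open box of buffer capacities is bounded above. -/
theorem stmt_10 (E : Type*) [Fintype E]
    (Eplus bd : Finset E) (B C : E → ℝ) (lamU : ℝ)
    (fin fout : (E → ℝ) → E → ℝ)
    (hbd : ∀ ρ : E → ℝ, (∀ e, ρ e ∈ Set.Icc 0 (B e)) →
      ∑ e ∈ bd, fout ρ e ≤ ∑ e ∈ bd, C e)
    (hrate : ∀ ρ : E → ℝ, (∀ e, ρ e ∈ Set.Icc 0 (B e)) →
      lamU - ∑ e ∈ bd, C e ≤ ∑ e ∈ Eplus, (fin ρ e - fout ρ e))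
    (hover : ∑ e ∈ bd, C e < lamU)
    (ρ : ℝ → E → ℝ)
    (hρ : ∀ t ≥ (0 : ℝ), HasDerivAt ρ (fun e => fin (ρ t) e - fout (ρ t) e) t)
    (hρ0 : ∀ e, ρ 0 e ∈ Set.Ico 0 (B e))
    (κ : ℝ) (hκ0 : 0 ≤ κ)
    (hκ : ∀ t ∈ Set.Ico 0 κ, ∀ e, ρ t e ∈ Set.Ico 0 (B e)) :
    κ ≤ (∑ e ∈ Eplus, (B e - ρ 0 e)) / (lamU - ∑ e ∈ bd, C e) := by
  set Cb := ∑ e ∈ bd, C e with hCb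
  set r := lamU - Cb with hrdef
  have hrpos : 0 < r := sub_pos.mpr hover
  set g : ℝ → ℝ := fun t => ∑ e ∈ Eplus, ρ t e with hg
  have hgd : ∀ t ≥ (0:ℝ), HasDerivAt g (∑ e ∈ Eplus, (fin (ρ t) e - fout (ρ t) e)) t := by
    intro t ht
    have e0 : g = ∑ i ∈ Eplus, fun x => ρ x i := by ext x; simp [hg, Finset.sum_apply]
    rw [e0]
    exact HasDerivAt.sum fun e _ => (hasDerivAt_pi.mp (hρ t ht)) e
  set M := ∑ e ∈ Eplus, (B e - ρ 0 e) with hM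
  have hM0 : 0 ≤ M := Finset.sum_nonneg fun e _ => sub_nonneg.mpr (hρ0 e).2.le
  -- growth on [0, κ)
  have key : ∀ t ∈ Set.Ico (0:ℝ) κ, r * t ≤ g t - g 0 := by
    intro t ht
    set h : ℝ → ℝ := fun s => g s - r * s with hh
    have hd : ∀ s ∈ Set.Icc (0:ℝ) t, HasDerivAt h
        (∑ e ∈ Eplus, (fin (ρ s) e - fout (ρ s) e) - r) s := by
      intro s hs
      have e0 : h = g - fun y => r * id y := by ext x; simp [hh]
      have h1 := (hgd s hs.1).sub ((hasDerivAt_id s).const_mul r)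
      rw [mul_one, ← e0] at h1
      exact h1
    have hmono : MonotoneOn h (Set.Icc 0 t) := by
      apply monotoneOn_of_deriv_nonneg (convex_Icc 0 t)
      · exact fun s hs => ((hd s hs).continuousAt).continuousWithinAt
      · intro s hs
        rw [interior_Icc] at hs
        exact ((hd s ⟨hs.1.le, hs.2.le⟩).differentiableAt).differentiableWithinAt
      · intro s hs
        rw [interior_Icc] at hs
        have hsκ : s ∈ Set.Ico (0:ℝ) κ := ⟨hs.1.le, hs.2.trans ht.2⟩
        have hbox : ∀ e, ρ s e ∈ Set.Icc 0 (B e) := fun e =>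
          ⟨(hκ s hsκ e).1, (hκ s hsκ e).2.le⟩
        have := hrate (ρ s) hbox
        rw [(hd s ⟨hs.1.le, hs.2.le⟩).deriv]
        linarith
    have h01 := hmono (Set.left_mem_Icc.mpr ht.1) (Set.right_mem_Icc.mpr ht.1) ht.1
    simp only [hh] at h01
    linarith
  have hbound : ∀ t ∈ Set.Ico (0:ℝ) κ, r * t ≤ M := by
    intro t ht
    have h1 := key t ht
    have h2 : g t ≤ ∑ e ∈ Eplus, B e := Finset.sum_le_sum fun e _ => (hκ t ht e).2.le
    have h3 : ∑ e ∈ Eplus, B e - g 0 = M := by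
      rw [hM, Finset.sum_sub_distrib]
    linarith
  by_contra hcon
  push_neg at hcon
  have hMr : M / r < κ := hcon
  have hMr0 : 0 ≤ M / r := div_nonneg hM0 hrpos.le
  set t := (M / r + κ) / 2 with htdef
  have ht1 : M / r < t := by rw [htdef]; linarith
  have ht2 : t < κ := by rw [htdef]; linarith
  have ht0 : 0 ≤ t := by linarith
  have := hbound t ⟨ht0, ht2⟩
  have : t ≤ M / r := (le_div_iff₀ hrpos).mpr (by linarith [this])
  linarith
end
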